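/- arXiv:1302.3064 — 3 statements merged into one kernel-verified Lean document; each statement's English description precedes it below -/
import Mathlib

section
/- Let Δ be a simplicial complex on vertex set V and x ∈ V. Then the Castelnuovo–Mumford regularity of Δ (defined as the maximum j such that the reduced homology H̃_{j-1} of some induced subcomplex Δ[S], S ⊆ V, is nonzero over a field k) satisfies reg(Δ) ≤ max{reg(del_Δ(x)), reg(lk_Δ(x)) + 1}. -/
open scoped Classical

noncomputable section

/-! ## Simplicial complexes and Castelnuovo–Mumford regularity -/

/-- A (abstract) simplicial complex on the vertex type `V`, given as a
downward closed family of finsets. -/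
def IsComplex {V : Type} (Δ : Finset V → Prop) : Prop :=
  ∀ ⦃F G : Finset V⦄, Δ F → G ⊆ F → Δ G

/-- The faces of cardinality `n` of a family `Δ` (faces of card `n` are the
`(n-1)`-dimensional simplices). -/
def Faces {V : Type} (Δ : Finset V → Prop) (n : ℕ) : Type :=
  {F : Finset V // Δ F ∧ F.card = n}

/-- The simplicial boundary map of the (augmented) chain complex of `Δ` over
a field `k`, from chains on faces of card `n+1` to chains on faces of card `n`,
with signs determined by a linear order on the vertices. -/
def cxBoundary {V : Type} (k : Type) [Field k] [LinearOrder V]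
    (Δ : Finset V → Prop) (n : ℕ) :
    (Faces Δ (n + 1) →₀ k) →ₗ[k] (Faces Δ n →₀ k) :=
  Finsupp.lsum k fun F => LinearMap.toSpanSingleton k _
    (∑ x ∈ F.1.attach,
      ((-1 : k) ^ (F.1.filter (fun z => z < x.1)).card) •
        (if h : Δ (F.1.erase x.1) ∧ (F.1.erase x.1).card = n then
          Finsupp.single (⟨F.1.erase x.1, h⟩ : Faces Δ n) (1 : k) else 0))

/-- Cycles in chain degree `j` (faces of card `j`); in the bottom degree every
chain is a cycle (augmented complex). -/
def cxCycles {V : Type} (k : Type) [Field k] [LinearOrder V]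
    (Δ : Finset V → Prop) : (j : ℕ) → Submodule k (Faces Δ j →₀ k)
  | 0 => ⊤
  | (n + 1) => LinearMap.ker (cxBoundary k Δ n)

/-- Nonvanishing of the reduced homology `H̃_{j-1}(Δ; k)`: there is a cycle
supported on faces of cardinality `j` that is not a boundary. -/
def HNontrivial {V : Type} (k : Type) [Field k] [LinearOrder V]
    (Δ : Finset V → Prop) (j : ℕ) : Prop :=
  ¬ (cxCycles k Δ j ≤ LinearMap.range (cxBoundary k Δ j))

/-- The induced subcomplex `Δ[S]` on a set `S` of vertices. -/
def restrictC {V : Type} (Δ : Finset V → Prop) (S : Set V) : Finset V → Prop :=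
  fun F => ↑F ⊆ S ∧ Δ F

/-- The Castelnuovo–Mumford regularity of `Δ` over the field `k`:
the largest `j` such that `H̃_{j-1}(Δ[S]; k) ≠ 0` for some subset `S` of the
vertices. -/
def regC {V : Type} [Fintype V] (k : Type) [Field k] (Δ : Finset V → Prop) : ℕ :=
  letI : LinearOrder V :=
    LinearOrder.lift' (Fintype.equivFin V) (Fintype.equivFin V).injective
  sSup {j : ℕ | ∃ S : Set V, HNontrivial k (restrictC Δ S) j}

/-- The deletion `del_Δ(x)`. -/
def delC {V : Type} (Δ : Finset V → Prop) (x : V) : Finset V → Prop :=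
  fun F => Δ F ∧ x ∉ F

/-- The link `lk_Δ(x)`. -/
def lkC {V : Type} (Δ : Finset V → Prop) (x : V) : Finset V → Prop :=
  fun F => x ∉ F ∧ Δ (insert x F)

/-! ## Independence complexes and regularity of graphs -/

/-- The independence complex of a graph, as a family of finsets. -/
def indepFaces {V : Type} (G : SimpleGraph V) : Finset V → Prop :=
  fun F => ∀ u ∈ F, ∀ v ∈ F, ¬ G.Adj u v

/-- The regularity `reg(G)` of a graph: the regularity of its independence
complex over `k`. -/
def gReg {V : Type} [Fintype V] (k : Type) [Field k] (G : SimpleGraph V) : ℕ :=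
  regC k (indepFaces G)

/-- The regularity of the subgraph of `G` induced on the vertex set `S`. -/
def gRegOn {V : Type} [Fintype V] (k : Type) [Field k] (G : SimpleGraph V)
    (S : Set V) : ℕ :=
  regC k (restrictC (indepFaces G) S)

/-! ## Geometric realization, suspension, wedge -/

/-- The geometric realization of a family of finsets `Δ` on a finite vertex
type: convex combinations of vertices supported on a face. -/
abbrev cxSpace {V : Type} [Fintype V] (Δ : Finset V → Prop) : Type :=
  {f : V → ℝ // (∃ F : Finset V, Δ F ∧ ∀ v, f v ≠ 0 → v ∈ F) ∧
    (∀ v, 0 ≤ f v) ∧ ∑ v, f v = 1}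

/-- Relation generating the unreduced suspension: the two ends of the cylinder
are collapsed to two (always present) poles. -/
def suspRel (X : Type) : (X × unitInterval ⊕ Bool) → (X × unitInterval ⊕ Bool) → Prop
  | Sum.inl (x, t), Sum.inr b => (t = 0 ∧ b = false) ∨ (t = 1 ∧ b = true)
  | _, _ => False

/-- The unreduced suspension `Σ X` (the join of `X` with a two-point space). -/
abbrev Susp (X : Type) [TopologicalSpace X] : Type := Quot (suspRel X)

/-- Relation generating the wedge sum with respect to chosen basepoints. -/
def wedgeRel (X Y : Type) (x₀ : X) (y₀ : Y) : X ⊕ Y → X ⊕ Y → Prop :=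
  fun p q => p = Sum.inl x₀ ∧ q = Sum.inr y₀

/-- The wedge sum `X ∨ Y` with respect to chosen basepoints. -/
abbrev Wedge (X Y : Type) [TopologicalSpace X] [TopologicalSpace Y]
    (x₀ : X) (y₀ : Y) : Type := Quot (wedgeRel X Y x₀ y₀)

/-! ## Graph invariants -/

/-- `M` is an induced matching of `G`: a set of edges, pairwise with distinct
endpoints and with no edge of `G` between the endpoints of distinct members. -/
def IsInducedMatching {V : Type} (G : SimpleGraph V) (M : Finset (V × V)) : Prop :=
  (∀ p ∈ M, G.Adj p.1 p.2) ∧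
    ∀ p ∈ M, ∀ q ∈ M, p ≠ q →
      p.1 ≠ q.1 ∧ p.1 ≠ q.2 ∧ p.2 ≠ q.1 ∧ p.2 ≠ q.2 ∧
      ¬ G.Adj p.1 q.1 ∧ ¬ G.Adj p.1 q.2 ∧ ¬ G.Adj p.2 q.1 ∧ ¬ G.Adj p.2 q.2

/-- The induced matching number `im(G)`. -/
def inducedMatchingNumber {V : Type} (G : SimpleGraph V) : ℕ :=
  sSup {n : ℕ | ∃ M : Finset (V × V), IsInducedMatching G M ∧ M.card = n}

/-- The independence number `α(G)`. -/
def indepNumber {V : Type} (G : SimpleGraph V) : ℕ :=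
  sSup {n : ℕ | ∃ s : Finset V, (∀ u ∈ s, ∀ v ∈ s, ¬ G.Adj u v) ∧ s.card = n}

/-- The decycling number `∇(G)`: the least size of a set of vertices whose
removal leaves an acyclic graph. -/
def decyclingNumber {V : Type} [Fintype V] (G : SimpleGraph V) : ℕ :=
  sInf {n : ℕ | ∃ D : Finset V, D.card = n ∧
    (G.induce {v : V | v ∉ D}).IsAcyclic}

/-- `K` contains an induced cycle on `n` vertices. -/
def HasInducedCycle {V : Type} (K : SimpleGraph V) (n : ℕ) : Prop :=
  ∃ f : Fin n ↪ V, ∀ i j : Fin n,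
    K.Adj (f i) (f j) ↔ ((j : ℕ) = ((i : ℕ) + 1) % n ∨ (i : ℕ) = ((j : ℕ) + 1) % n)

/-- A graph is cochordal if its complement is chordal, i.e. the complement has
no induced cycle of length at least `4`. -/
def Cochordal {V : Type} (H : SimpleGraph V) : Prop :=
  ∀ n : ℕ, 4 ≤ n → ¬ HasInducedCycle Hᶜ n

/-- The cochordal cover number `cochord(G)`: the least number of cochordal
subgraphs of `G` whose edge sets cover the edges of `G`. -/
def cochordCover {V : Type} (G : SimpleGraph V) : ℕ :=
  sInf {r : ℕ | ∃ H : Fin r → SimpleGraph V,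
    (∀ i, H i ≤ G ∧ Cochordal (H i)) ∧ ∀ u v, G.Adj u v → ∃ i, (H i).Adj u v}

/-- The graph `G*` on the edge set of `G`: two edges are adjacent iff the
subgraph induced by their endpoints is `2K₂` (disjoint, with no cross edges). -/
def starGraph {V : Type} (G : SimpleGraph V) : SimpleGraph G.edgeSet :=
  SimpleGraph.fromRel fun e f =>
    ∀ a ∈ (e.1 : Sym2 V), ∀ b ∈ (f.1 : Sym2 V), a ≠ b ∧ ¬ G.Adj a b

/-- The chromatic number, as a natural number. -/
def chromNum {W : Type} (H : SimpleGraph W) : ℕ :=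
  sInf {n : ℕ | ∃ c : W → Fin n, ∀ u v, H.Adj u v → c u ≠ c v}

/-- The clique number `ω`. -/
def cliqueNum {W : Type} (H : SimpleGraph W) : ℕ :=
  sSup {n : ℕ | ∃ s : Finset W, H.IsNClique n s}

/-- A graph is perfect if every induced subgraph has chromatic number equal to
its clique number. -/
def IsPerfect {W : Type} (H : SimpleGraph W) : Prop :=
  ∀ A : Set W, chromNum (H.induce A) = cliqueNum (H.induce A)

/-! ## Lozin transform, triple subdivision, whiskers -/

/-- Generating relation for the Lozin transform `L_x(G; Y, Z)`: delete `x`,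
add the path `y(=0) - a(=1) - b(=2) - z(=3)` on four new vertices, join `y`
to every vertex of `Y` and `z` to every vertex of `Z`. -/
def lozinRel {V : Type} (G : SimpleGraph V) (x : V) (Y Z : Set V) :
    ({w : V // w ≠ x} ⊕ Fin 4) → ({w : V // w ≠ x} ⊕ Fin 4) → Prop
  | Sum.inl u, Sum.inl w => G.Adj u.1 w.1
  | Sum.inl u, Sum.inr i => (i = 0 ∧ u.1 ∈ Y) ∨ (i = 3 ∧ u.1 ∈ Z)
  | Sum.inr i, Sum.inr j => (i : ℕ) + 1 = (j : ℕ)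
  | _, _ => False

/-- The Lozin transform `L_x(G; Y, Z)` of `G` at the vertex `x`. -/
def lozinModel {V : Type} (G : SimpleGraph V) (x : V) (Y Z : Set V) :
    SimpleGraph ({w : V // w ≠ x} ⊕ Fin 4) :=
  SimpleGraph.fromRel (lozinRel G x Y Z)

/-- `{Y, Z}` is a partition of the open neighborhood of `x`. -/
def IsLozinPartition {V : Type} (G : SimpleGraph V) (x : V) (Y Z : Set V) : Prop :=
  Y ∪ Z = G.neighborSet x ∧ Disjoint Y Z

/-- Generating relation for the triple subdivision of the edge `(u,v)`:
the edge `uv` is removed and replaced by the path `u - y(=0) - a(=1) - b(=2) - v`. -/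
def tripleSubRel {V : Type} (G : SimpleGraph V) (u v : V) :
    (V ⊕ Fin 3) → (V ⊕ Fin 3) → Prop
  | Sum.inl a, Sum.inl b => G.Adj a b ∧ ¬(a = u ∧ b = v) ∧ ¬(a = v ∧ b = u)
  | Sum.inl a, Sum.inr i => (a = u ∧ i = 0) ∨ (a = v ∧ i = 2)
  | Sum.inr i, Sum.inr j => (i : ℕ) + 1 = (j : ℕ)
  | _, _ => False

/-- The triple subdivision `L(G; e)` of `G` at the edge `e = (u,v)`. -/
def tripleSub {V : Type} (G : SimpleGraph V) (u v : V) : SimpleGraph (V ⊕ Fin 3) :=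
  SimpleGraph.fromRel (tripleSubRel G u v)

/-- Generating relation for the whisker `W_S(G)`: attach a new pendant vertex
to each vertex of `S`. -/
def whiskerSRel {V : Type} (G : SimpleGraph V) (S : Finset V) :
    (V ⊕ {s : V // s ∈ S}) → (V ⊕ {s : V // s ∈ S}) → Prop
  | Sum.inl a, Sum.inl b => G.Adj a b
  | Sum.inl a, Sum.inr s => a = s.1
  | _, _ => False

/-- The whisker graph `W_S(G)` on `V ⊕ S`. -/
def whiskerS {V : Type} (G : SimpleGraph V) (S : Finset V) :
    SimpleGraph (V ⊕ {s : V // s ∈ S}) :=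
  SimpleGraph.fromRel (whiskerSRel G S)

/-- Generating relation for the full whisker `W(G)`: attach a pendant vertex
to every vertex. -/
def whiskerRel {V : Type} (G : SimpleGraph V) : (V ⊕ V) → (V ⊕ V) → Prop
  | Sum.inl a, Sum.inl b => G.Adj a b
  | Sum.inl a, Sum.inr b => a = b
  | _, _ => False

/-- The full whisker graph `W(G)` on `V ⊕ V`. -/
def whiskerGraph {V : Type} (G : SimpleGraph V) : SimpleGraph (V ⊕ V) :=
  SimpleGraph.fromRel (whiskerRel G)

/-! ## Vertex decomposability -/

/-- The closed neighborhood of `x` inside the finset `A`. -/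
def closedNbrOn {V : Type} (G : SimpleGraph V) (A : Finset V) (x : V) : Finset V :=
  A.filter fun z => z = x ∨ G.Adj x z

/-- `T` is an independent set of `G`. -/
def IsIndepFinset {V : Type} (G : SimpleGraph V) (T : Finset V) : Prop :=
  ∀ u ∈ T, ∀ v ∈ T, ¬ G.Adj u v

/-- `x` is a shedding vertex of the induced subgraph `G[A]`. -/
def IsSheddingOn {V : Type} (G : SimpleGraph V) (A : Finset V) (x : V) : Prop :=
  ∀ T ⊆ A \ closedNbrOn G A x, IsIndepFinset G T →
    ∃ w ∈ A, G.Adj x w ∧ IsIndepFinset G (insert w T)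

/-- Vertex decomposability of the induced subgraph `G[A]`. -/
def VDOn {V : Type} (G : SimpleGraph V) : Finset V → Prop := fun A =>
  (∀ u ∈ A, ∀ v ∈ A, ¬ G.Adj u v) ∨
    ∃ x : {y : V // y ∈ A}, IsSheddingOn G A x.1 ∧
      VDOn G (A.erase x.1) ∧ VDOn G (A \ closedNbrOn G A x.1)
termination_by A => A.card
decreasing_by
  · exact Finset.card_erase_lt_of_mem x.2
  · refine Finset.card_lt_card ?_
    refine (Finset.ssubset_iff_of_subset Finset.sdiff_subset).2 ⟨x.1, x.2, ?_⟩
    simp [closedNbrOn, x.2]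

end
noncomputable section AuxAll

section Aux
variable {V : Type} (k : Type) [Field k] [LinearOrder V]

def sgn (F : Finset V) (y : V) : k := (-1 : k) ^ (F.filter (fun z => z < y)).card

section Sgn
variable {x y : V} {F : Finset V}

theorem sgn_insert_self : sgn k (insert x F) x = sgn k F x := by
  unfold sgn
  rw [Finset.filter_insert, if_neg (lt_irrefl x)]

theorem sgn_erase_self : sgn k (F.erase x) x = sgn k F x := by
  unfold sgn
  rw [Finset.filter_erase, Finset.erase_eq_of_notMem (by simp)]

theorem sgn_mul_self : sgn k F x * sgn k F x = 1 := by
  unfold sgn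
  rw [← pow_add]
  exact Even.neg_one_pow ⟨_, rfl⟩

theorem sgn_key (hx : x ∉ F) (hy : y ∈ F) :
    sgn k F x * sgn k (insert x F) y = -(sgn k F y * sgn k (F.erase y) x) := by
  have hxy : x ≠ y := fun h => hx (h ▸ hy)
  unfold sgn
  rcases lt_or_gt_of_ne hxy with h | h
  · have h1 : (insert x F).filter (fun z => z < y) = insert x (F.filter (fun z => z < y)) := by
      rw [Finset.filter_insert, if_pos h]
    have h2 : (F.erase y).filter (fun z => z < x) = F.filter (fun z => z < x) := by
      rw [Finset.filter_erase]
      exact Finset.erase_eq_of_notMem (by simp [asymm h])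
    rw [h1, h2, Finset.card_insert_of_notMem (fun hmem => hx (Finset.mem_filter.1 hmem).1),
      pow_succ]
    ring
  · have h1 : (insert x F).filter (fun z => z < y) = F.filter (fun z => z < y) := by
      rw [Finset.filter_insert, if_neg (asymm h)]
    have hyf : y ∈ F.filter (fun z => z < x) := Finset.mem_filter.2 ⟨hy, h⟩
    have h2 : (F.erase y).filter (fun z => z < x) = (F.filter (fun z => z < x)).erase y :=
      Finset.filter_erase _ y F
    have h3 : ((F.filter (fun z => z < x)).erase y).card + 1 =
        (F.filter (fun z => z < x)).card := Finset.card_erase_add_one hyf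
    rw [h1, h2, ← h3, pow_succ]
    ring

end Sgn

/-- full boundary map on the big module -/
def Bd : (Finset V →₀ k) →ₗ[k] (Finset V →₀ k) :=
  Finsupp.lsum k fun F => LinearMap.toSpanSingleton k _
    (∑ y ∈ F.attach,
      ((-1 : k) ^ (F.filter (fun z => z < y.1)).card) •
        Finsupp.single (F.erase y.1) (1 : k))

variable (x : V)

def psiM : (Finset V →₀ k) →ₗ[k] (Finset V →₀ k) :=
  Finsupp.lsum k fun F => LinearMap.toSpanSingleton k _
    (if x ∈ F then 0 else sgn k F x • Finsupp.single (insert x F) (1 : k))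

def thetaM : (Finset V →₀ k) →ₗ[k] (Finset V →₀ k) :=
  Finsupp.lsum k fun F => LinearMap.toSpanSingleton k _
    (if x ∈ F then sgn k (F.erase x) x • Finsupp.single (F.erase x) (1 : k) else 0)

theorem Bd_single (F : Finset V) (a : k) :
    Bd k (Finsupp.single F a) =
      ∑ y ∈ F, (a * sgn k F y) • Finsupp.single (F.erase y) (1 : k) := by
  rw [Bd, Finsupp.lsum_single, LinearMap.toSpanSingleton_apply, Finset.smul_sum]
  rw [← Finset.sum_attach F (fun y => (a * sgn k F y) • Finsupp.single (F.erase y) (1 : k))]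
  refine Finset.sum_congr rfl fun y _ => ?_
  rw [smul_smul]; rfl

theorem psiM_single_pos (F : Finset V) (a : k) (h : x ∈ F) :
    psiM k x (Finsupp.single F a) = 0 := by
  rw [psiM, Finsupp.lsum_single, LinearMap.toSpanSingleton_apply, if_pos h, smul_zero]

theorem psiM_single_neg (F : Finset V) (a : k) (h : x ∉ F) :
    psiM k x (Finsupp.single F a) =
      (a * sgn k F x) • Finsupp.single (insert x F) (1 : k) := by
  rw [psiM, Finsupp.lsum_single, LinearMap.toSpanSingleton_apply, if_neg h, smul_smul]

theorem thetaM_single_pos (F : Finset V) (a : k) (h : x ∈ F) :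
    thetaM k x (Finsupp.single F a) =
      (a * sgn k (F.erase x) x) • Finsupp.single (F.erase x) (1 : k) := by
  rw [thetaM, Finsupp.lsum_single, LinearMap.toSpanSingleton_apply, if_pos h, smul_smul]

theorem thetaM_single_neg (F : Finset V) (a : k) (h : x ∉ F) :
    thetaM k x (Finsupp.single F a) = 0 := by
  rw [thetaM, Finsupp.lsum_single, LinearMap.toSpanSingleton_apply, if_neg h, smul_zero]

theorem cone_single (F : Finset V) (a : k) :
    Bd k (psiM k x (Finsupp.single F a)) + psiM k x (Bd k (Finsupp.single F a)) =
      Finsupp.single F a := by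
  by_cases hx : x ∈ F
  · rw [psiM_single_pos k x F a hx, map_zero, zero_add, Bd_single, map_sum]
    rw [Finset.sum_eq_single_of_mem x hx ?side]
    case side =>
      intro y hy hne
      rw [map_smul, psiM_single_pos k x _ _ (Finset.mem_erase.2 ⟨hne.symm, hx⟩), smul_zero]
    rw [map_smul, psiM_single_neg k x _ _ (Finset.notMem_erase x F),
      Finset.insert_erase hx, one_mul, smul_smul, sgn_erase_self, mul_assoc, sgn_mul_self,
      mul_one, Finsupp.smul_single, smul_eq_mul, mul_one]
  · have hxterm : (a * sgn k F x) • ((1 * sgn k (insert x F) x) •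
        Finsupp.single ((insert x F).erase x) (1 : k)) = Finsupp.single F a := by
      rw [Finset.erase_insert hx, sgn_insert_self, one_mul, smul_smul, mul_assoc, sgn_mul_self,
        mul_one, Finsupp.smul_single, smul_eq_mul, mul_one]
    have hterm : ∀ y ∈ F,
        (a * sgn k F x) • ((1 * sgn k (insert x F) y) •
          Finsupp.single ((insert x F).erase y) (1 : k)) +
        psiM k x ((a * sgn k F y) • Finsupp.single (F.erase y) (1 : k)) = 0 := by
      intro y hy
      have hxy : x ≠ y := fun h => hx (h ▸ hy)
      rw [map_smul, psiM_single_neg k x _ _ (fun h => hx (Finset.mem_of_mem_erase h)),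
        Finset.erase_insert_of_ne hxy, smul_smul, smul_smul, one_mul, one_mul, ← add_smul]
      have hk := sgn_key k hx hy
      have hco : a * sgn k F x * sgn k (insert x F) y +
          a * sgn k F y * sgn k (F.erase y) x = 0 := by linear_combination a * hk
      rw [hco, zero_smul]
    rw [psiM_single_neg k x F a hx, map_smul, Bd_single, Finset.smul_sum,
      Finset.sum_insert hx, Bd_single, map_sum, hxterm, add_assoc, ← Finset.sum_add_distrib,
      Finset.sum_eq_zero hterm, add_zero]

theorem cone (c : Finset V →₀ k) :
    Bd k (psiM k x c) + psiM k x (Bd k c) = c := by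
  induction c using Finsupp.induction_linear with
  | zero => rw [map_zero, map_zero, map_zero, add_zero]
  | add f g hf hg =>
    rw [map_add, map_add, map_add, map_add, add_add_add_comm, hf, hg]
  | single F a => exact cone_single k x F a

end Aux

section Aux2
variable {V : Type} (k : Type) [Field k] [LinearOrder V] (x : V)

theorem thetapsi_single (F : Finset V) (a : k) (h : x ∉ F) :
    thetaM k x (psiM k x (Finsupp.single F a)) = Finsupp.single F a := by
  rw [psiM_single_neg k x F a h, map_smul,
    thetaM_single_pos k x _ _ (Finset.mem_insert_self x F), Finset.erase_insert h, one_mul,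
    smul_smul, mul_assoc, sgn_mul_self, mul_one, Finsupp.smul_single, smul_eq_mul, mul_one]

theorem psitheta_single_pos (F : Finset V) (a : k) (h : x ∈ F) :
    psiM k x (thetaM k x (Finsupp.single F a)) = Finsupp.single F a := by
  rw [thetaM_single_pos k x F a h, map_smul,
    psiM_single_neg k x _ _ (Finset.notMem_erase x F), Finset.insert_erase h, one_mul,
    smul_smul, mul_assoc, sgn_mul_self, mul_one, Finsupp.smul_single, smul_eq_mul, mul_one]

theorem map_eq_on {L₁ L₂ : (Finset V →₀ k) →ₗ[k] (Finset V →₀ k)} {q : Finset V → Prop}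
    (h : ∀ (F : Finset V) (a : k), q F → L₁ (Finsupp.single F a) = L₂ (Finsupp.single F a))
    (c : Finset V →₀ k) (hc : ∀ F ∈ c.support, q F) : L₁ c = L₂ c := by
  induction c using Finsupp.induction with
  | zero => rw [map_zero, map_zero]
  | single_add F b f hF hb ih =>
    have hd : Disjoint (Finsupp.single F b).support f.support := by
      rw [Finsupp.support_single_ne_zero F hb]; simpa using hF
    have hsupp : (Finsupp.single F b + f).support = {F} ∪ f.support := by
      rw [Finsupp.support_add_eq hd, Finsupp.support_single_ne_zero F hb]
    have hqF : q F := hc F (by rw [hsupp]; simp)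
    have hqf : ∀ G ∈ f.support, q G := fun G hG => hc G (by rw [hsupp]; simp [hG])
    rw [map_add, map_add, h F b hqF, ih hqf]

theorem map_supp {M₁ : (Finset V →₀ k) →ₗ[k] (Finset V →₀ k)} {p q : Finset V → Prop}
    (h : ∀ (F : Finset V) (a : k), q F → ∀ G ∈ (M₁ (Finsupp.single F a)).support, p G)
    (c : Finset V →₀ k) (hc : ∀ F ∈ c.support, q F) : ∀ G ∈ (M₁ c).support, p G := by
  induction c using Finsupp.induction with
  | zero => simp
  | single_add F b f hF hb ih =>
    have hd : Disjoint (Finsupp.single F b).support f.support := by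
      rw [Finsupp.support_single_ne_zero F hb]; simpa using hF
    have hsupp : (Finsupp.single F b + f).support = {F} ∪ f.support := by
      rw [Finsupp.support_add_eq hd, Finsupp.support_single_ne_zero F hb]
    have hqF : q F := hc F (by rw [hsupp]; simp)
    have hqf : ∀ G ∈ f.support, q G := fun G hG => hc G (by rw [hsupp]; simp [hG])
    intro G hG
    rw [map_add] at hG
    rcases Finset.mem_union.1 (Finsupp.support_add hG) with h' | h'
    · exact h F b hqF G h'
    · exact ih hqf G h'

theorem supp_Bd_single (F : Finset V) (a : k) :
    ∀ G ∈ (Bd k (Finsupp.single F a)).support, ∃ y ∈ F, G = F.erase y := by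
  intro G hG
  rw [Bd_single] at hG
  obtain ⟨y, hy, hmem⟩ := Finsupp.mem_support_finset_sum G hG
  refine ⟨y, hy, ?_⟩
  have := Finsupp.support_single_subset (Finset.mem_of_subset (Finsupp.support_smul) hmem)
  simpa using this

theorem supp_psi_single (F : Finset V) (a : k) :
    ∀ G ∈ (psiM k x (Finsupp.single F a)).support, x ∉ F ∧ G = insert x F := by
  intro G hG
  by_cases h : x ∈ F
  · rw [psiM_single_pos k x F a h] at hG; simp at hG
  · rw [psiM_single_neg k x F a h] at hG
    refine ⟨h, ?_⟩
    have := Finsupp.support_single_subset (Finset.mem_of_subset (Finsupp.support_smul) hG)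
    simpa using this

theorem supp_theta_single (F : Finset V) (a : k) :
    ∀ G ∈ (thetaM k x (Finsupp.single F a)).support, x ∈ F ∧ G = F.erase x := by
  intro G hG
  by_cases h : x ∈ F
  · rw [thetaM_single_pos k x F a h] at hG
    refine ⟨h, ?_⟩
    have := Finsupp.support_single_subset (Finset.mem_of_subset (Finsupp.support_smul) hG)
    simpa using this
  · rw [thetaM_single_neg k x F a h] at hG; simp at hG

theorem embB (P : Finset V → Prop) (hP : IsComplex P) (n : ℕ) (c : Faces P (n + 1) →₀ k) :
    Finsupp.mapDomain Subtype.val (cxBoundary k P n c) =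
      Bd k (Finsupp.mapDomain Subtype.val c) := by
  induction c using Finsupp.induction_linear with
  | zero => erw [map_zero, Finsupp.mapDomain_zero, map_zero]
  | add f g hf hg =>
    erw [map_add, Finsupp.mapDomain_add, Finsupp.mapDomain_add, map_add, hf, hg]
  | single F a =>
    obtain ⟨F, hF⟩ := F
    have h1 : cxBoundary k P n (Finsupp.single ⟨F, hF⟩ a) =
        a • ∑ y ∈ F.attach, ((-1 : k) ^ (F.filter (fun z => z < y.1)).card) •
          Finsupp.single (⟨F.erase y.1, ⟨hP hF.1 (Finset.erase_subset y.1 F),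
            by rw [Finset.card_erase_of_mem y.2, hF.2, Nat.add_sub_cancel]⟩⟩ : Faces P n)
            (1 : k) := by
      erw [cxBoundary, Finsupp.lsum_single, LinearMap.toSpanSingleton_apply]
      congr 1
      refine Finset.sum_congr rfl fun y _ => ?_
      rw [dif_pos]
    erw [Finsupp.mapDomain_single, Bd_single, h1, Finsupp.mapDomain_smul,
      Finsupp.mapDomain_finset_sum, Finset.smul_sum,
      ← Finset.sum_attach F (fun y => (a * sgn k F y) • Finsupp.single (F.erase y) (1 : k))]
    refine Finset.sum_congr rfl fun y _ => ?_
    rw [Finsupp.mapDomain_smul, Finsupp.mapDomain_single, smul_smul]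
    rfl

theorem lift_supported (P : Finset V → Prop) (n : ℕ) (c : Finset V →₀ k)
    (hc : ∀ F ∈ c.support, P F ∧ F.card = n) :
    ∃ d : Faces P n →₀ k, Finsupp.mapDomain Subtype.val d = c := by
  refine ⟨Finsupp.comapDomain Subtype.val c Subtype.val_injective.injOn,
    Finsupp.mapDomain_comapDomain _ Subtype.val_injective c ?_⟩
  intro F hF
  exact ⟨⟨F, hc F hF⟩, rfl⟩

theorem emb_supp (P : Finset V → Prop) (n : ℕ) (d : Faces P n →₀ k) :
    ∀ F ∈ (Finsupp.mapDomain (Subtype.val) d).support, P F ∧ F.card = n := by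
  intro F hF
  obtain ⟨y, _, rfl⟩ := Finset.mem_image.1 (Finsupp.mapDomain_support hF)
  exact y.2

end Aux2

section Aux3
variable {V : Type} (k : Type) [Field k] [LinearOrder V] (x : V)

theorem theta_eq_zero_on (c : Finset V →₀ k) (hc : ∀ F ∈ c.support, x ∉ F) :
    thetaM k x c = 0 :=
  map_eq_on k (L₂ := 0)
    (fun F a hq => by rw [thetaM_single_neg k x F a hq, LinearMap.zero_apply]) c hc

theorem thetapsi_eq (c : Finset V →₀ k) (hc : ∀ F ∈ c.support, x ∉ F) :
    thetaM k x (psiM k x c) = c := by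
  have := map_eq_on k (L₁ := (thetaM k x) ∘ₗ (psiM k x)) (L₂ := LinearMap.id)
    (fun F a hq => by
      rw [LinearMap.comp_apply, thetapsi_single k x F a hq, LinearMap.id_apply]) c hc
  simpa using this

theorem Bd_xfree (c : Finset V →₀ k) (hc : ∀ F ∈ c.support, x ∉ F) :
    ∀ G ∈ (Bd k c).support, x ∉ G :=
  map_supp k (fun F a hq G hG => by
    obtain ⟨y, hy, rfl⟩ := supp_Bd_single k F a G hG
    exact fun hxG => hq (Finset.mem_of_mem_erase hxG)) c hc

def embV (P : Finset V → Prop) (n : ℕ) : (Faces P n →₀ k) →ₗ[k] (Finset V →₀ k) :=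
  Finsupp.lmapDomain k k Subtype.val

theorem embV_inj (P : Finset V → Prop) (n : ℕ) :
    Function.Injective (embV k P n) :=
  Finsupp.mapDomain_injective Subtype.val_injective

theorem embV_B (P : Finset V → Prop) (hP : IsComplex P) (n : ℕ) (c : Faces P (n + 1) →₀ k) :
    embV k P n (cxBoundary k P n c) = Bd k (embV k P (n + 1) c) :=
  embB k P hP n c

theorem embV_lift (P : Finset V → Prop) (n : ℕ) (c : Finset V →₀ k)
    (hc : ∀ F ∈ c.support, P F ∧ F.card = n) :
    ∃ d : Faces P n →₀ k, embV k P n d = c :=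
  lift_supported k P n c hc

theorem embV_supp (P : Finset V → Prop) (n : ℕ) (d : Faces P n →₀ k) :
    ∀ F ∈ (embV k P n d).support, P F ∧ F.card = n :=
  emb_supp k P n d

theorem key {x : V} (Γ D L : Finset V → Prop) (hΓ : IsComplex Γ)
    (hD : ∀ F, D F ↔ Γ F ∧ x ∉ F) (hL : ∀ F, L F ↔ x ∉ F ∧ Γ (insert x F))
    (m : ℕ) (h : HNontrivial k Γ (m + 1)) :
    HNontrivial k D (m + 1) ∨ HNontrivial k L m := by
  have hDc : IsComplex D := fun F G hF hGF =>
    (hD G).2 ⟨hΓ ((hD F).1 hF).1 hGF, fun hxG => ((hD F).1 hF).2 (hGF hxG)⟩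
  have hLc : IsComplex L := fun F G hF hGF =>
    (hL G).2 ⟨fun hxG => ((hL F).1 hF).1 (hGF hxG),
      hΓ ((hL F).1 hF).2 (Finset.insert_subset_insert x hGF)⟩
  unfold HNontrivial at h
  rw [SetLike.le_def] at h
  push_neg at h
  obtain ⟨z, hzc, hznb⟩ := h
  set Z := embV k Γ (m + 1) z with hZdef
  have hZsupp := embV_supp k Γ (m + 1) z
  have hBZ : Bd k Z = 0 := by
    have hz0 : cxBoundary k Γ m z = 0 := LinearMap.mem_ker.1 hzc
    rw [hZdef, ← embV_B k Γ hΓ m z, hz0, map_zero]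
  set w' := thetaM k x Z with hw'def
  have hw'supp : ∀ F ∈ w'.support, (L F ∧ F.card = m) ∧ x ∉ F := by
    refine map_supp k ?_ Z hZsupp
    intro F a hq G hG
    obtain ⟨hxF, rfl⟩ := supp_theta_single k x F a G hG
    exact ⟨⟨(hL _).2 ⟨Finset.notMem_erase x F, by rw [Finset.insert_erase hxF]; exact hq.1⟩,
      by rw [Finset.card_erase_of_mem hxF, hq.2, Nat.add_sub_cancel]⟩,
      Finset.notMem_erase x F⟩
  have hZ0supp : ∀ F ∈ (Z - psiM k x w').support, D F ∧ F.card = m + 1 := by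
    have heq : Z - psiM k x w' = ((LinearMap.id : (Finset V →₀ k) →ₗ[k] (Finset V →₀ k)) - (psiM k x) ∘ₗ (thetaM k x)) Z := by
      rw [LinearMap.sub_apply, LinearMap.id_apply, LinearMap.comp_apply, hw'def]
    rw [heq]
    refine map_supp k ?_ Z hZsupp
    intro F a hq G hG
    rw [LinearMap.sub_apply, LinearMap.id_apply, LinearMap.comp_apply] at hG
    by_cases hxF : x ∈ F
    · rw [psitheta_single_pos k x F a hxF, sub_self] at hG
      simp at hG
    · rw [thetaM_single_neg k x F a hxF, map_zero, sub_zero] at hG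
      have hGF := Finsupp.support_single_subset hG
      rw [Finset.mem_singleton] at hGF
      exact hGF ▸ ⟨(hD F).2 ⟨hq.1, hxF⟩, hq.2⟩
  have hcone : Bd k (psiM k x w') = w' - psiM k x (Bd k w') :=
    eq_sub_of_add_eq (cone k x w')
  have hBdw' : Bd k w' = 0 := by
    have hsplit : Bd k (Z - psiM k x w') + (w' - psiM k x (Bd k w')) = 0 := by
      rw [map_sub, hcone, hBZ]
      abel
    have h1 : thetaM k x (Bd k (Z - psiM k x w')) = 0 :=
      theta_eq_zero_on k x _ (Bd_xfree k x _ (fun F hF => ((hD F).1 (hZ0supp F hF).1).2))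
    have h2 : thetaM k x w' = 0 :=
      theta_eq_zero_on k x _ (fun F hF => (hw'supp F hF).2)
    have h3 : thetaM k x (psiM k x (Bd k w')) = Bd k w' :=
      thetapsi_eq k x _ (Bd_xfree k x _ (fun F hF => (hw'supp F hF).2))
    have := congrArg (thetaM k x) hsplit
    rw [map_add, h1, map_sub, h2, h3, map_zero, zero_add, zero_sub, neg_eq_zero] at this
    exact this
  obtain ⟨w, hw⟩ := embV_lift k L m w' (fun F hF => (hw'supp F hF).1)
  have hwcyc : w ∈ cxCycles k L m := by
    cases m with
    | zero => exact Submodule.mem_top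
    | succ m' =>
      refine LinearMap.mem_ker.2 ?_
      apply embV_inj k L m'
      rw [embV_B k L hLc m' w, hw, hBdw', map_zero]
  by_cases hwb : w ∈ LinearMap.range (cxBoundary k L m)
  case neg => exact Or.inr (fun hle => hwb (hle hwcyc))
  obtain ⟨u₀, hu₀⟩ := hwb
  have hu : cxBoundary k L m (-u₀) = -w := by rw [map_neg, hu₀]
  set U := embV k L (m + 1) (-u₀) with hUdef
  have hUsupp := embV_supp k L (m + 1) (-u₀)
  have hBU : Bd k U = -w' := by
    rw [hUdef, ← embV_B k L hLc m (-u₀), hu, map_neg, hw]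
  set Z' := Z - psiM k x w' - U with hZ'def
  have hZ'supp : ∀ F ∈ Z'.support, D F ∧ F.card = m + 1 := by
    intro F hF
    rcases Finset.mem_union.1 (Finsupp.support_sub hF) with h' | h'
    · exact hZ0supp F h'
    · have hLF := hUsupp F h'
      exact ⟨(hD F).2 ⟨hΓ ((hL F).1 hLF.1).2 (Finset.subset_insert x F),
        ((hL F).1 hLF.1).1⟩, hLF.2⟩
  have hBZ' : Bd k Z' = 0 := by
    rw [hZ'def, map_sub, map_sub, hBZ, hcone, hBU, hBdw', map_zero, sub_zero]
    abel
  obtain ⟨y, hy⟩ := embV_lift k D (m + 1) Z' hZ'supp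
  have hycyc : y ∈ cxCycles k D (m + 1) := by
    refine LinearMap.mem_ker.2 ?_
    apply embV_inj k D m
    rw [embV_B k D hDc m y, hy, hBZ', map_zero]
  refine Or.inl (fun hle => hznb ?_)
  obtain ⟨v, hv⟩ := hle hycyc
  set Vv := embV k D (m + 2) v with hVdef
  have hVsupp := embV_supp k D (m + 2) v
  have hBpsiU : Bd k (psiM k x U) = U + psiM k x w' := by
    rw [eq_sub_of_add_eq (cone k x U), hBU, map_neg, sub_neg_eq_add]
  have hBVv : Bd k Vv = Z' := by
    rw [hVdef, ← embV_B k D hDc (m + 1) v, hv, hy]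
  have hBig : Bd k (Vv + psiM k x U) = Z := by
    rw [map_add, hBpsiU, hBVv, hZ'def]
    abel
  have hsupp2 : ∀ F ∈ (Vv + psiM k x U).support, Γ F ∧ F.card = m + 2 := by
    have hpsiU : ∀ G ∈ (psiM k x U).support, Γ G ∧ G.card = m + 2 := by
      refine map_supp k ?_ U hUsupp
      intro F a hq G hG
      obtain ⟨hxF, rfl⟩ := supp_psi_single k x F a G hG
      exact ⟨((hL F).1 hq.1).2, by rw [Finset.card_insert_of_notMem hxF, hq.2]⟩
    intro F hF
    rcases Finset.mem_union.1 (Finsupp.support_add hF) with h' | h'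
    · have := hVsupp F h'
      exact ⟨((hD F).1 this.1).1, this.2⟩
    · exact hpsiU F h'
  obtain ⟨p, hp⟩ := embV_lift k Γ (m + 2) _ hsupp2
  refine ⟨p, ?_⟩
  apply embV_inj k Γ (m + 1)
  rw [embV_B k Γ hΓ (m + 1) p, hp, hBig, hZdef]
end Aux3

section Glue
variable {V : Type} [Fintype V] (k : Type) [Field k] [LinearOrder V]

theorem hn_le (P : Finset V → Prop) (j : ℕ) (h : HNontrivial k P j) :
    j ≤ Fintype.card V := by
  by_contra hj
  push_neg at hj
  apply h
  intro c _
  have hc0 : c = 0 := by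
    ext a
    exfalso
    have h1 : a.1.card ≤ Fintype.card V := by
      simpa [Finset.card_univ] using Finset.card_le_univ a.1
    have h2 := a.2.2
    omega
  rw [hc0]
  exact Submodule.zero_mem _

theorem bddA (P : Finset V → Prop) :
    BddAbove {j : ℕ | ∃ S : Set V, HNontrivial k (restrictC P S) j} :=
  ⟨Fintype.card V, fun j hj => by obtain ⟨S, hS⟩ := hj; exact hn_le k _ j hS⟩

theorem main_glue (Δ : Finset V → Prop) (hΔ : IsComplex Δ) (x : V) :
    sSup {j : ℕ | ∃ S : Set V, HNontrivial k (restrictC Δ S) j} ≤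
      max (sSup {j : ℕ | ∃ S : Set V, HNontrivial k (restrictC (delC Δ x) S) j})
        (sSup {j : ℕ | ∃ S : Set V, HNontrivial k (restrictC (lkC Δ x) S) j} + 1) := by
  rcases Set.eq_empty_or_nonempty
    {j : ℕ | ∃ S : Set V, HNontrivial k (restrictC Δ S) j} with hA | hA
  · rw [hA, csSup_empty]
    exact Nat.zero_le _
  refine csSup_le hA ?_
  rintro j ⟨S, hS⟩
  match j with
  | 0 => exact le_trans (Nat.zero_le _) (le_max_right _ _)
  | (m + 1) =>
    by_cases hxS : x ∈ S
    · have hΓc : IsComplex (restrictC Δ S) := fun F G hF hGF =>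
        ⟨subset_trans (Finset.coe_subset.2 hGF) hF.1, hΔ hF.2 hGF⟩
      have hDiff : ∀ F, restrictC (delC Δ x) S F ↔ restrictC Δ S F ∧ x ∉ F := by
        intro F; unfold restrictC delC; tauto
      have hLiff : ∀ F, restrictC (lkC Δ x) S F ↔ x ∉ F ∧ restrictC Δ S (insert x F) := by
        intro F
        unfold restrictC lkC
        simp only [Finset.coe_insert, Set.insert_subset_iff]
        constructor
        · rintro ⟨h1, h2, h3⟩; exact ⟨h2, ⟨hxS, h1⟩, by convert h3 using 3 <;> exact Subsingleton.elim _ _⟩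
        · rintro ⟨h1, ⟨_, h2⟩, h3⟩; exact ⟨h2, h1, by convert h3 using 3 <;> exact Subsingleton.elim _ _⟩
      rcases key k (restrictC Δ S) (restrictC (delC Δ x) S) (restrictC (lkC Δ x) S)
        hΓc hDiff hLiff m hS with hdel | hlk
      · exact le_max_of_le_left (le_csSup (bddA k _) ⟨S, hdel⟩)
      · refine le_max_of_le_right ?_
        have hm : m ≤ sSup {j : ℕ | ∃ S : Set V, HNontrivial k (restrictC (lkC Δ x) S) j} :=
          le_csSup (bddA k _) ⟨S, hlk⟩
        omega
    · have heq : restrictC (delC Δ x) S = restrictC Δ S := by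
        funext F
        apply propext
        unfold restrictC delC
        constructor
        · tauto
        · rintro ⟨h1, h2⟩
          exact ⟨h1, h2, fun hxF => hxS (h1 hxF)⟩
      exact le_max_of_le_left (le_csSup (bddA k _) ⟨S, by rw [heq]; exact hS⟩)

end Glue


end AuxAll

/-- If `Δ` is a simplicial complex on `V` and `x ∈ V`, then
`reg(Δ) ≤ max (reg(del_Δ(x))) (reg(lk_Δ(x)) + 1)`. -/
theorem regC_le_max_del_link {V : Type} [Fintype V] (k : Type) [Field k]
    (Δ : Finset V → Prop) (hΔ : IsComplex Δ) (x : V) :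
    regC k Δ ≤ max (regC k (delC Δ x)) (regC k (lkC Δ x) + 1) := by
  unfold regC
  letI : LinearOrder V :=
    LinearOrder.lift' (Fintype.equivFin V) (Fintype.equivFin V).injective
  exact main_glue k Δ hΔ x
end

section
/- If G is a graph and u, v are vertices with N_G(u) ⊆ N_G(v), then the independence complex I(G) is homotopy equivalent to the independence complex I(G − v). -/
open scoped Classical

/-- The weight-shifting map: move `t` of the mass at `v` onto `u`. -/
noncomputable def pushWeightFun {V : Type} (u v : V) (t : ℝ) (f : V → ℝ) (w : V) : ℝ :=
  f w + (if w = u then t * f v else 0) - (if w = v then t * f v else 0)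

lemma pushFun_sum {V : Type} [Fintype V] (u v : V) (t : ℝ) (f : V → ℝ)
    (hf : ∑ w, f w = 1) : ∑ w, pushWeightFun u v t f w = 1 := by
  simp [pushWeightFun, Finset.sum_add_distrib, Finset.sum_sub_distrib, hf]

lemma pushFun_nonneg {V : Type} (u v : V) (huv : u ≠ v) {t : ℝ} (ht0 : 0 ≤ t) (ht1 : t ≤ 1)
    {f : V → ℝ} (hf : ∀ w, 0 ≤ f w) (w : V) : 0 ≤ pushWeightFun u v t f w := by
  unfold pushWeightFun
  rcases eq_or_ne w u with rfl | hwu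
  · rw [if_pos rfl, if_neg huv]
    nlinarith [hf w, hf v]
  · rcases eq_or_ne w v with rfl | hwv
    · rw [if_neg hwu, if_pos rfl]
      nlinarith [hf w]
    · rw [if_neg hwu, if_neg hwv]
      simpa using hf w

lemma pushFun_eq_self {V : Type} (u v : V) {t : ℝ} {f : V → ℝ}
    (hfv : t * f v = 0) : pushWeightFun u v t f = f := by
  funext w
  simp [pushWeightFun, hfv]

/-- If `N_G(u) ⊆ N_G(v)` for distinct vertices `u, v`, then
`I(G)` is homotopy equivalent to `I(G - v)`. -/
theorem indepComplex_homotopyEquiv_of_nbhd_subset {V : Type} [Fintype V]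
    (G : SimpleGraph V) (u v : V) (huv : u ≠ v)
    (h : G.neighborSet u ⊆ G.neighborSet v) :
    Nonempty (ContinuousMap.HomotopyEquiv
      (cxSpace (indepFaces G))
      (cxSpace (restrictC (indepFaces G) {w | w ≠ v}))) := by
  classical
  have hadj : ¬ G.Adj u v := fun hA => G.irrefl (h hA)
  have hins : ∀ F : Finset V, indepFaces G F → v ∈ F → indepFaces G (insert u F) := by
    intro F hF hvF a ha b hb hab
    rcases Finset.mem_insert.1 ha with rfl | haF <;> rcases Finset.mem_insert.1 hb with rfl | hbF
    · exact G.irrefl hab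
    · rcases eq_or_ne b v with rfl | hbv
      · exact hadj hab
      · exact hF v hvF b hbF (h hab)
    · rcases eq_or_ne a v with rfl | hav
      · exact hadj hab.symm
      · exact hF v hvF a haF (h hab.symm)
    · exact hF a haF b hbF hab
  -- membership of the deformed point in the big complex
  have hmem : ∀ (t : ℝ), 0 ≤ t → t ≤ 1 → ∀ f : cxSpace (indepFaces G),
      (∃ F : Finset V, indepFaces G F ∧ ∀ w, pushWeightFun u v t f.1 w ≠ 0 → w ∈ F) ∧
      (∀ w, 0 ≤ pushWeightFun u v t f.1 w) ∧ ∑ w, pushWeightFun u v t f.1 w = 1 := by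
    intro t ht0 ht1 f
    obtain ⟨⟨F, hF, hsupp⟩, hpos, hsum⟩ := f.2
    refine ⟨?_, pushFun_nonneg u v huv ht0 ht1 hpos, pushFun_sum u v t f.1 hsum⟩
    by_cases hfv : t * f.1 v = 0
    · exact ⟨F, hF, fun w hw => hsupp w (by rw [pushFun_eq_self u v hfv] at hw; exact hw)⟩
    · have hvF : v ∈ F := hsupp v (fun h0 => hfv (by simp [h0]))
      refine ⟨insert u F, hins F hF hvF, fun w hw => ?_⟩
      rcases eq_or_ne w u with rfl | hwu
      · exact Finset.mem_insert_self _ _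
      · rcases eq_or_ne w v with rfl | hwv
        · exact Finset.mem_insert_of_mem hvF
        · refine Finset.mem_insert_of_mem (hsupp w ?_)
          simpa [pushWeightFun, hwu, hwv] using hw
  -- membership of the fully pushed point in the restricted complex
  have hmemY : ∀ f : cxSpace (indepFaces G),
      (∃ F : Finset V, restrictC (indepFaces G) {w | w ≠ v} F ∧
        ∀ w, pushWeightFun u v 1 f.1 w ≠ 0 → w ∈ F) ∧
      (∀ w, 0 ≤ pushWeightFun u v 1 f.1 w) ∧ ∑ w, pushWeightFun u v 1 f.1 w = 1 := by
    intro f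
    obtain ⟨⟨F, hF, hsupp⟩, hpos, hsum⟩ := f.2
    refine ⟨?_, pushFun_nonneg u v huv zero_le_one le_rfl hpos, pushFun_sum u v 1 f.1 hsum⟩
    have hpushv : pushWeightFun u v 1 f.1 v = 0 := by
      simp [pushWeightFun, huv.symm]
    by_cases hfv : f.1 v = 0
    · refine ⟨F.erase v, ⟨fun w hw => (Finset.mem_erase.1 hw).1,
        fun a ha b hb => hF a (Finset.erase_subset _ _ ha) b (Finset.erase_subset _ _ hb)⟩,
        fun w hw => ?_⟩
      have hfw := pushFun_eq_self u v (t := 1) (f := f.1) (by simp [hfv])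
      rw [hfw] at hw
      refine Finset.mem_erase.2 ⟨?_, hsupp w hw⟩
      rintro rfl
      rw [hfw] at hpushv
      exact hw hpushv
    · have hvF : v ∈ F := hsupp v hfv
      refine ⟨insert u (F.erase v), ⟨?_, ?_⟩, fun w hw => ?_⟩
      · intro w hw
        rcases Finset.mem_insert.1 hw with rfl | hw
        · exact huv
        · exact (Finset.mem_erase.1 hw).1
      · intro a ha b hb
        have hsub : insert u (F.erase v) ⊆ insert u F :=
          Finset.insert_subset_insert _ (Finset.erase_subset _ _)
        exact hins F hF hvF a (hsub ha) b (hsub hb)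
      · rcases eq_or_ne w u with rfl | hwu
        · exact Finset.mem_insert_self _ _
        · have hwv : w ≠ v := by rintro rfl; exact hw hpushv
          refine Finset.mem_insert_of_mem (Finset.mem_erase.2 ⟨hwv, hsupp w ?_⟩)
          simpa [pushWeightFun, hwu, hwv] using hw
  -- vertices in the restricted complex give weight 0 to v
  have hYv : ∀ f : cxSpace (restrictC (indepFaces G) {w | w ≠ v}), f.1 v = 0 := by
    intro f
    obtain ⟨⟨F, ⟨hFsub, _⟩, hsupp⟩, _, _⟩ := f.2
    by_contra h0
    exact (hFsub (hsupp v h0)) rfl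
  -- the two continuous maps
  have hcont : ∀ w : V, Continuous fun p : unitInterval × cxSpace (indepFaces G) =>
      pushWeightFun u v (p.1 : ℝ) p.2.1 w := by
    intro w
    unfold pushWeightFun
    have h1 : Continuous fun p : unitInterval × cxSpace (indepFaces G) => p.2.1 w :=
      (continuous_apply w).comp (continuous_subtype_val.comp continuous_snd)
    have h2 : Continuous fun p : unitInterval × cxSpace (indepFaces G) =>
        (p.1 : ℝ) * p.2.1 v :=
      (continuous_subtype_val.comp continuous_fst).mul
        ((continuous_apply v).comp (continuous_subtype_val.comp continuous_snd))
    split_ifs <;> fun_prop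
  let X := cxSpace (indepFaces G)
  let Y := cxSpace (restrictC (indepFaces G) {w | w ≠ v})
  let ψ : C(X, Y) := ⟨fun f => ⟨pushWeightFun u v 1 f.1, hmemY f⟩, by
    refine Continuous.subtype_mk (continuous_pi fun w => ?_) _
    have := (hcont w).comp (Continuous.prodMk (continuous_const (y := (1 : unitInterval)))
      continuous_id)
    exact this⟩
  let φ : C(Y, X) := ⟨fun f => ⟨f.1, ⟨f.2.1.choose, f.2.1.choose_spec.1.2, f.2.1.choose_spec.2⟩,
      f.2.2.1, f.2.2.2⟩, Continuous.subtype_mk continuous_subtype_val _⟩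
  have hright : ψ.comp φ = ContinuousMap.id Y := by
    ext f : 1
    apply Subtype.ext
    funext w
    have hfv : f.1 v = 0 := hYv f
    show pushWeightFun u v 1 f.1 w = f.1 w
    rw [pushFun_eq_self u v (by simp [hfv])]
  have H : ContinuousMap.Homotopy (ContinuousMap.id X) (φ.comp ψ) := by
    refine ⟨⟨fun p => ⟨pushWeightFun u v (p.1 : ℝ) p.2.1, hmem _ p.1.2.1 p.1.2.2 p.2⟩, ?_⟩, ?_, ?_⟩
    · exact Continuous.subtype_mk (continuous_pi fun w => hcont w) _
    · intro x
      apply Subtype.ext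
      funext w
      show pushWeightFun u v ((0 : unitInterval) : ℝ) x.1 w = x.1 w
      rw [pushFun_eq_self u v (by norm_num)]
    · intro x
      apply Subtype.ext
      funext w
      show pushWeightFun u v ((1 : unitInterval) : ℝ) x.1 w = pushWeightFun u v 1 x.1 w
      norm_num
  exact ⟨⟨ψ, φ, ⟨H.symm⟩, hright ▸ ⟨ContinuousMap.Homotopy.refl _⟩⟩⟩
end

section
/- If G is a graph and u, v are vertices with N_G[u] ⊆ N_G[v], then I(G) is homotopy equivalent to the wedge I(G − v) ∨ Σ I(G − N_G[v]), where Σ denotes unreduced suspension. -/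
open scoped Classical

noncomputable section

namespace Eng

set_option linter.unusedSectionVars false
set_option linter.unusedVariables false
set_option maxHeartbeats 1000000

variable {V : Type} [Fintype V]

/-- generic: compactness of cxSpace -/
theorem isCompact_cxSet (Δ : Finset V → Prop) :
    IsCompact {f : V → ℝ | (∃ F : Finset V, Δ F ∧ ∀ v, f v ≠ 0 → v ∈ F) ∧
      (∀ v, 0 ≤ f v) ∧ ∑ v, f v = 1} := by
  have hclosed : IsClosed {f : V → ℝ | (∃ F : Finset V, Δ F ∧ ∀ v, f v ≠ 0 → v ∈ F) ∧
      (∀ v, 0 ≤ f v) ∧ ∑ v, f v = 1} := by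
    have h1 : {f : V → ℝ | ∃ F : Finset V, Δ F ∧ ∀ v, f v ≠ 0 → v ∈ F}
        = ⋃ F ∈ {F : Finset V | Δ F}, {f : V → ℝ | ∀ v, v ∉ F → f v = 0} := by
      ext f
      simp only [Set.mem_setOf_eq, Set.mem_iUnion]
      constructor
      · rintro ⟨F, hF, hs⟩
        exact ⟨F, hF, fun w hw => by_contra fun h0 => hw (hs w h0)⟩
      · rintro ⟨F, hF, hs⟩
        exact ⟨F, hF, fun w hw => by_contra fun h0 => hw (hs w h0)⟩
    have hc1 : IsClosed {f : V → ℝ | ∃ F : Finset V, Δ F ∧ ∀ v, f v ≠ 0 → v ∈ F} := by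
      rw [h1]
      apply Set.Finite.isClosed_biUnion (Set.toFinite _)
      intro F _
      have : {f : V → ℝ | ∀ v, v ∉ F → f v = 0} = ⋂ v ∈ {v : V | v ∉ F}, {f : V → ℝ | f v = 0} := by
        ext f; simp [Set.mem_iInter]
      rw [this]
      exact isClosed_biInter fun w _ => isClosed_eq (continuous_apply w) continuous_const
    have hc2 : IsClosed {f : V → ℝ | ∀ v, 0 ≤ f v} := by
      have : {f : V → ℝ | ∀ v, 0 ≤ f v} = ⋂ v, {f : V → ℝ | 0 ≤ f v} := by
        ext f; simp [Set.mem_iInter]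
      rw [this]
      exact isClosed_iInter fun w => isClosed_le continuous_const (continuous_apply w)
    have hc3 : IsClosed {f : V → ℝ | ∑ v, f v = 1} :=
      isClosed_eq (by continuity) continuous_const
    have : {f : V → ℝ | (∃ F : Finset V, Δ F ∧ ∀ v, f v ≠ 0 → v ∈ F) ∧
        (∀ v, 0 ≤ f v) ∧ ∑ v, f v = 1}
        = {f : V → ℝ | ∃ F : Finset V, Δ F ∧ ∀ v, f v ≠ 0 → v ∈ F}
          ∩ ({f : V → ℝ | ∀ v, 0 ≤ f v} ∩ {f : V → ℝ | ∑ v, f v = 1}) := by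
      ext f; simp [Set.mem_inter_iff, and_assoc]
    rw [this]
    exact hc1.inter (hc2.inter hc3)
  refine IsCompact.of_isClosed_subset (isCompact_univ_pi fun _ => isCompact_Icc (a := (0:ℝ)) (b := 1)) hclosed ?_
  rintro f ⟨-, h0, h1⟩
  intro w _
  refine ⟨h0 w, ?_⟩
  calc f w ≤ ∑ v, f v := Finset.single_le_sum (fun i _ => h0 i) (Finset.mem_univ w)
  _ = 1 := h1

instance cxCompact (Δ : Finset V → Prop) : CompactSpace (cxSpace Δ) :=
  isCompact_iff_compactSpace.mp (isCompact_cxSet Δ)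

/-- descend continuity along a surjection from a compact space -/
theorem descend {A B C : Type} [TopologicalSpace A] [TopologicalSpace B] [TopologicalSpace C]
    [CompactSpace A] [T2Space B] {c : A → B} (hc : Continuous c)
    (hs : Function.Surjective c) {F : A → C} (hF : Continuous F)
    {φ : B → C} (hφ : ∀ a, φ (c a) = F a) : Continuous φ := by
  have hq : Topology.IsQuotientMap c := (hc.isClosedMap).isQuotientMap hc hs
  rw [hq.continuous_iff]
  have : φ ∘ c = F := funext hφ
  rw [this]; exact hF

theorem glue2 {A B : Type} [TopologicalSpace A] [CompactSpace A] [T2Space A]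
    [TopologicalSpace B] {φ : A → B} {C1 C2 : Set A}
    (hu : C1 ∪ C2 = Set.univ) (hc1 : IsClosed C1) (hc2 : IsClosed C2)
    {f1 : C1 → B} (hf1 : Continuous f1) {f2 : C2 → B} (hf2 : Continuous f2)
    (he1 : ∀ x : C1, φ x.1 = f1 x) (he2 : ∀ x : C2, φ x.1 = f2 x) :
    Continuous φ := by
  haveI : CompactSpace C1 := isCompact_iff_compactSpace.mp (hc1.isCompact)
  haveI : CompactSpace C2 := isCompact_iff_compactSpace.mp (hc2.isCompact)
  refine descend (c := (Sum.elim Subtype.val Subtype.val : C1 ⊕ C2 → A))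
      (continuous_subtype_val.sumElim continuous_subtype_val) ?_
      (F := Sum.elim f1 f2) (hf1.sumElim hf2) ?_
  · intro a
    have : a ∈ C1 ∪ C2 := hu ▸ Set.mem_univ a
    rcases this with h | h
    · exact ⟨Sum.inl ⟨a, h⟩, rfl⟩
    · exact ⟨Sum.inr ⟨a, h⟩, rfl⟩
  · rintro (x | x)
    · exact he1 x
    · exact he2 x

theorem glue3 {A B : Type} [TopologicalSpace A] [CompactSpace A] [T2Space A]
    [TopologicalSpace B] {φ : A → B} {C1 C2 C3 : Set A}
    (hu : C1 ∪ C2 ∪ C3 = Set.univ) (hc1 : IsClosed C1) (hc2 : IsClosed C2) (hc3 : IsClosed C3)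
    {f1 : C1 → B} (hf1 : Continuous f1) {f2 : C2 → B} (hf2 : Continuous f2)
    {f3 : C3 → B} (hf3 : Continuous f3)
    (he1 : ∀ x : C1, φ x.1 = f1 x) (he2 : ∀ x : C2, φ x.1 = f2 x)
    (he3 : ∀ x : C3, φ x.1 = f3 x) : Continuous φ := by
  haveI : CompactSpace C1 := isCompact_iff_compactSpace.mp (hc1.isCompact)
  haveI : CompactSpace C2 := isCompact_iff_compactSpace.mp (hc2.isCompact)
  haveI : CompactSpace C3 := isCompact_iff_compactSpace.mp (hc3.isCompact)
  refine descend (c := (Sum.elim Subtype.val (Sum.elim Subtype.val Subtype.val) :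
      C1 ⊕ (C2 ⊕ C3) → A))
      (continuous_subtype_val.sumElim (continuous_subtype_val.sumElim continuous_subtype_val)) ?_
      (F := Sum.elim f1 (Sum.elim f2 f3)) (hf1.sumElim (hf2.sumElim hf3)) ?_
  · intro a
    have : a ∈ C1 ∪ C2 ∪ C3 := hu ▸ Set.mem_univ a
    rcases this with (h | h) | h
    · exact ⟨Sum.inl ⟨a, h⟩, rfl⟩
    · exact ⟨Sum.inr (Sum.inl ⟨a, h⟩), rfl⟩
    · exact ⟨Sum.inr (Sum.inr ⟨a, h⟩), rfl⟩
  · rintro (x | x | x)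
    · exact he1 x
    · exact he2 x
    · exact he3 x


/-! ### delta functions and the generic mixing formula -/

def deltaFn (a : V) : V → ℝ := fun w => if w = a then 1 else 0

theorem deltaFn_nonneg (a : V) : ∀ w, 0 ≤ deltaFn a w := by
  intro w; unfold deltaFn; split <;> norm_num

theorem deltaFn_sum (a : V) : ∑ w, deltaFn (V := V) a w = 1 := by
  unfold deltaFn; rw [Finset.sum_ite_eq' Finset.univ a fun _ => (1:ℝ)]
  simp

theorem deltaFn_support {a w : V} (hw : deltaFn a w ≠ 0) : w = a := by
  by_contra hne; exact hw (if_neg hne)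

theorem eq_deltaFn_of_coord_one {f : V → ℝ} (h0 : ∀ w, 0 ≤ f w) (h1 : ∑ w, f w = 1)
    {a : V} (ha : f a = 1) : f = deltaFn a := by
  funext w
  rcases eq_or_ne w a with rfl | hne
  · simp [deltaFn, ha]
  · have hsum : ∑ x ∈ Finset.univ.erase a, f x = 0 := by
      have := Finset.add_sum_erase Finset.univ f (Finset.mem_univ a)
      rw [h1] at this
      linarith [this]
    have : f w = 0 := by
      have := (Finset.sum_eq_zero_iff_of_nonneg (fun i _ => h0 i)).mp hsum w
        (Finset.mem_erase.mpr ⟨hne, Finset.mem_univ w⟩)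
      exact this
    simp [deltaFn, hne, this]

def mixFn (u v : V) (f : V → ℝ) (α β γ : ℝ) : V → ℝ :=
  fun w => (if w = v then β else γ * f w) + (if w = u then α else 0)

theorem mixFn_nonneg {u v : V} {f : V → ℝ} {α β γ : ℝ} (hf : ∀ w, 0 ≤ f w)
    (hα : 0 ≤ α) (hβ : 0 ≤ β) (hγ : 0 ≤ γ) : ∀ w, 0 ≤ mixFn u v f α β γ w := by
  intro w; unfold mixFn
  have : 0 ≤ γ * f w := mul_nonneg hγ (hf w)
  split <;> split <;> simp_all <;> linarith

theorem mixFn_sum {u v : V} (huv : u ≠ v) {f : V → ℝ} (h1 : ∑ w, f w = 1) (α β γ : ℝ) :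
    ∑ w, mixFn u v f α β γ w = β + γ * (1 - f v) + α := by
  unfold mixFn
  rw [Finset.sum_add_distrib]
  have e1 : ∀ w, (if w = v then β else γ * f w) = γ * f w + (if w = v then β - γ * f v else 0) := by
    intro w; split
    · subst w; ring_nf
    · ring
  rw [Finset.sum_congr rfl fun w _ => e1 w, Finset.sum_add_distrib, ← Finset.mul_sum, h1,
    Finset.sum_ite_eq' Finset.univ v fun _ => β - γ * f v,
    Finset.sum_ite_eq' Finset.univ u fun _ => α]
  simp; ring

theorem mixFn_support {u v : V} {f : V → ℝ} {α β γ : ℝ} {w : V}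
    (hw : mixFn u v f α β γ w ≠ 0) :
    (w = v ∧ β ≠ 0) ∨ (w ≠ v ∧ γ ≠ 0 ∧ f w ≠ 0) ∨ (w = u ∧ α ≠ 0) := by
  unfold mixFn at hw
  have h2 : (if w = v then β else γ * f w) ≠ 0 ∨ (if w = u then α else 0) ≠ 0 := by
    by_contra hc
    push_neg at hc
    exact hw (by rw [hc.1, hc.2, add_zero])
  rcases h2 with h2 | h2
  · by_cases hv : w = v
    · exact Or.inl ⟨hv, by rwa [if_pos hv] at h2⟩
    · rw [if_neg hv] at h2
      rcases mul_ne_zero_iff.mp h2 with ⟨hγ, hf⟩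
      exact Or.inr (Or.inl ⟨hv, hγ, hf⟩)
  · by_cases hu : w = u
    · exact Or.inr (Or.inr ⟨hu, by rwa [if_pos hu] at h2⟩)
    · rw [if_neg hu] at h2; exact absurd rfl h2


/-! ### membership helpers -/

section Graph

variable {G : SimpleGraph V} {u v : V}

theorem mem_indep_of {f : V → ℝ}
    (hind : ∀ a b, f a ≠ 0 → f b ≠ 0 → ¬ G.Adj a b) :
    ∃ F, indepFaces G F ∧ ∀ w, f w ≠ 0 → w ∈ F := by
  refine ⟨Finset.univ.filter (fun w => f w ≠ 0), ?_, fun w hw => Finset.mem_filter.mpr ⟨Finset.mem_univ w, hw⟩⟩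
  intro a ha b hb
  exact hind a b (Finset.mem_filter.mp ha).2 (Finset.mem_filter.mp hb).2

theorem mem_restrict_of {f : V → ℝ} {S : Set V}
    (hS : ∀ w, f w ≠ 0 → w ∈ S)
    (hind : ∀ a b, f a ≠ 0 → f b ≠ 0 → ¬ G.Adj a b) :
    ∃ F, restrictC (indepFaces G) S F ∧ ∀ w, f w ≠ 0 → w ∈ F := by
  refine ⟨Finset.univ.filter (fun w => f w ≠ 0),
    ⟨?_, ?_⟩, fun w hw => Finset.mem_filter.mpr ⟨Finset.mem_univ w, hw⟩⟩
  · intro a ha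
    simp only [Finset.coe_filter, Set.mem_setOf_eq] at ha
    exact hS a ha.2
  · intro a ha b hb
    exact hind a b (Finset.mem_filter.mp ha).2 (Finset.mem_filter.mp hb).2

theorem indep_of_memX {f : V → ℝ}
    (hf : ∃ F, indepFaces G F ∧ ∀ w, f w ≠ 0 → w ∈ F) :
    ∀ a b, f a ≠ 0 → f b ≠ 0 → ¬ G.Adj a b := by
  obtain ⟨F, hF, hs⟩ := hf
  exact fun a b ha hb => hF a (hs a ha) b (hs b hb)

theorem indep_of_memR {f : V → ℝ} {S : Set V}
    (hf : ∃ F, restrictC (indepFaces G) S F ∧ ∀ w, f w ≠ 0 → w ∈ F) :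
    ∀ a b, f a ≠ 0 → f b ≠ 0 → ¬ G.Adj a b := by
  obtain ⟨F, hF, hs⟩ := hf
  exact fun a b ha hb => hF.2 a (hs a ha) b (hs b hb)

theorem set_of_memR {f : V → ℝ} {S : Set V}
    (hf : ∃ F, restrictC (indepFaces G) S F ∧ ∀ w, f w ≠ 0 → w ∈ F) :
    ∀ w, f w ≠ 0 → w ∈ S := by
  obtain ⟨F, hF, hs⟩ := hf
  exact fun w hw => hF.1 (hs w hw)

/-! ### independence of mixed supports -/

theorem huv' (hvu : G.Adj v u) : u ≠ v := fun h => G.irrefl (h ▸ hvu)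

/-- Type A: base point of the full complex, β = 0, and α forces v into support. -/
theorem indepA (hN : ∀ w, G.Adj u w → w = v ∨ G.Adj v w) {f : V → ℝ} {α γ : ℝ}
    (hind : ∀ a b, f a ≠ 0 → f b ≠ 0 → ¬ G.Adj a b)
    (hα : α ≠ 0 → f v ≠ 0) :
    ∀ a b, mixFn u v f α 0 γ a ≠ 0 → mixFn u v f α 0 γ b ≠ 0 → ¬ G.Adj a b := by
  have key : ∀ w, w ≠ v → f w ≠ 0 → f v ≠ 0 → ¬ G.Adj u w := by
    intro w hwv hw hv hadj
    rcases hN w hadj with h | h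
    · exact hwv h
    · exact hind v w hv hw h
  intro a b ha hb hadj
  rcases mixFn_support ha with ⟨hav, hβa⟩ | ⟨hav, -, hfa⟩ | ⟨hau, hαa⟩
  · exact hβa rfl
  · rcases mixFn_support hb with ⟨hbv, hβb⟩ | ⟨hbv, -, hfb⟩ | ⟨hbu, hαb⟩
    · exact hβb rfl
    · exact hind a b hfa hfb hadj
    · subst hbu; exact key a hav hfa (hα hαb) (G.adj_symm hadj)
  · rcases mixFn_support hb with ⟨hbv, hβb⟩ | ⟨hbv, -, hfb⟩ | ⟨hbu, hαb⟩
    · exact hβb rfl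
    · subst hau; exact key b hbv hfb (hα hαa) hadj
    · subst hau; subst hbu; exact G.irrefl hadj

/-- Type B: base point supported in the link set. -/
theorem indepB (hN : ∀ w, G.Adj u w → w = v ∨ G.Adj v w) {g : V → ℝ} {α β γ : ℝ}
    (hind : ∀ a b, g a ≠ 0 → g b ≠ 0 → ¬ G.Adj a b)
    (hLset : ∀ w, g w ≠ 0 → w ≠ v ∧ ¬ G.Adj v w)
    (hαβ : ¬ (α ≠ 0 ∧ β ≠ 0)) :
    ∀ a b, mixFn u v g α β γ a ≠ 0 → mixFn u v g α β γ b ≠ 0 → ¬ G.Adj a b := by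
  have keyu : ∀ w, g w ≠ 0 → ¬ G.Adj u w := by
    intro w hw hadj
    rcases hN w hadj with h | h
    · exact (hLset w hw).1 h
    · exact (hLset w hw).2 h
  intro a b ha hb hadj
  rcases mixFn_support ha with ⟨hav, hβa⟩ | ⟨hav, -, hfa⟩ | ⟨hau, hαa⟩
  · subst hav
    rcases mixFn_support hb with ⟨hbv, hβb⟩ | ⟨hbv, -, hfb⟩ | ⟨hbu, hαb⟩
    · subst hbv; exact G.irrefl hadj
    · exact (hLset b hfb).2 hadj
    · exact hαβ ⟨hαb, hβa⟩
  · rcases mixFn_support hb with ⟨hbv, hβb⟩ | ⟨hbv, -, hfb⟩ | ⟨hbu, hαb⟩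
    · subst hbv; exact (hLset a hfa).2 (G.adj_symm hadj)
    · exact hind a b hfa hfb hadj
    · subst hbu; exact keyu a hfa (G.adj_symm hadj)
  · subst hau
    rcases mixFn_support hb with ⟨hbv, hβb⟩ | ⟨hbv, -, hfb⟩ | ⟨hbu, hαb⟩
    · exact hαβ ⟨hαa, hβb⟩
    · exact keyu b hfb hadj
    · subst hbu; exact G.irrefl hadj

/-- Type C: base point of the full complex, α = 0, and β forces v into support. -/
theorem indepC {f : V → ℝ} {β γ : ℝ}
    (hind : ∀ a b, f a ≠ 0 → f b ≠ 0 → ¬ G.Adj a b)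
    (hβ : β ≠ 0 → f v ≠ 0) :
    ∀ a b, mixFn u v f 0 β γ a ≠ 0 → mixFn u v f 0 β γ b ≠ 0 → ¬ G.Adj a b := by
  intro a b ha hb hadj
  rcases mixFn_support ha with ⟨hav, hβa⟩ | ⟨hav, -, hfa⟩ | ⟨hau, hαa⟩
  · subst hav
    rcases mixFn_support hb with ⟨hbv, hβb⟩ | ⟨hbv, -, hfb⟩ | ⟨hbu, hαb⟩
    · subst hbv; exact G.irrefl hadj
    · exact hind a b (hβ hβa) hfb hadj
    · exact hαb rfl
  · rcases mixFn_support hb with ⟨hbv, hβb⟩ | ⟨hbv, -, hfb⟩ | ⟨hbu, hαb⟩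
    · subst hbv; exact hind a b hfa (hβ hβb) hadj
    · exact hind a b hfa hfb hadj
    · exact hαb rfl
  · exact hαa rfl

end Graph


/-! ### evaluation lemmas for mixFn -/

theorem mixFn_congr {u v : V} {f : V → ℝ} {α β γ α' β' γ' : ℝ}
    (hα : α = α') (hβ : β = β') (hγ : γ = γ') :
    mixFn u v f α β γ = mixFn u v f α' β' γ' := by rw [hα, hβ, hγ]

theorem mixFn_v {u v : V} (huv : u ≠ v) (f : V → ℝ) (α β γ : ℝ) :
    mixFn u v f α β γ v = β := by
  unfold mixFn
  rw [if_pos rfl, if_neg (fun hc => huv hc.symm), add_zero]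

theorem mixFn_u {u v : V} (huv : u ≠ v) (f : V → ℝ) (α β γ : ℝ) :
    mixFn u v f α β γ u = γ * f u + α := by
  unfold mixFn
  rw [if_neg huv, if_pos rfl]

theorem mixFn_w {u v w : V} (hwv : w ≠ v) (hwu : w ≠ u) (f : V → ℝ) (α β γ : ℝ) :
    mixFn u v f α β γ w = γ * f w := by
  unfold mixFn
  rw [if_neg hwv, if_neg hwu, add_zero]

theorem mixFn_alpha0 {u v w : V} (f : V → ℝ) (β γ : ℝ) :
    mixFn u v f 0 β γ w = if w = v then β else γ * f w := by
  unfold mixFn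
  split_ifs <;> simp

theorem mixFn_100 {u v : V} (huv : u ≠ v) (f : V → ℝ) :
    mixFn u v f 1 0 0 = deltaFn u := by
  funext w
  unfold mixFn deltaFn
  have h1 : ¬ (v = u) := fun hc => huv hc.symm
  rcases eq_or_ne w v with rfl | hv
  · simp [h1]
  · simp [hv]

/-! ### the context -/

structure Ctx (V : Type) [Fintype V] where
  G : SimpleGraph V
  u : V
  v : V
  hvu : G.Adj v u
  hN : ∀ w, G.Adj u w → w = v ∨ G.Adj v w

variable (c : Ctx V)

abbrev XX := cxSpace (indepFaces c.G)
abbrev XD := cxSpace (restrictC (indepFaces c.G) {w | w ≠ c.v})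
abbrev XL := cxSpace (restrictC (indepFaces c.G) {w | w ≠ c.v ∧ ¬ c.G.Adj c.v w})
abbrev SL := Susp (XL c)

theorem cuv : c.u ≠ c.v := huv' c.hvu

theorem XX_ind (f : XX c) : ∀ a b, f.1 a ≠ 0 → f.1 b ≠ 0 → ¬ c.G.Adj a b :=
  indep_of_memX f.2.1

theorem XD_ind (d : XD c) : ∀ a b, d.1 a ≠ 0 → d.1 b ≠ 0 → ¬ c.G.Adj a b :=
  indep_of_memR d.2.1

theorem XL_ind (g : XL c) : ∀ a b, g.1 a ≠ 0 → g.1 b ≠ 0 → ¬ c.G.Adj a b :=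
  indep_of_memR g.2.1

theorem XL_set (g : XL c) : ∀ w, g.1 w ≠ 0 → w ≠ c.v ∧ ¬ c.G.Adj c.v w :=
  set_of_memR g.2.1

theorem XL_v (g : XL c) : g.1 c.v = 0 := by
  by_contra h0
  exact (XL_set c g c.v h0).1 rfl

theorem XD_v (d : XD c) : d.1 c.v = 0 := by
  by_contra h0
  exact (set_of_memR d.2.1 c.v h0) rfl

theorem coord_le_one (f : XX c) (w : V) : f.1 w ≤ 1 := by
  calc f.1 w ≤ ∑ x, f.1 x := Finset.single_le_sum (fun i _ => f.2.2.1 i) (Finset.mem_univ w)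
  _ = 1 := f.2.2.2

theorem fu0 (f : XX c) (hv : f.1 c.v ≠ 0) : f.1 c.u = 0 := by
  by_contra hu
  exact XX_ind c f c.v c.u hv hu c.hvu

theorem memX_of_memD {f : V → ℝ}
    (hf : (∃ F, restrictC (indepFaces c.G) {w | w ≠ c.v} F ∧ ∀ w, f w ≠ 0 → w ∈ F) ∧
      (∀ w, 0 ≤ f w) ∧ ∑ w, f w = 1) :
    (∃ F, indepFaces c.G F ∧ ∀ w, f w ≠ 0 → w ∈ F) ∧
      (∀ w, 0 ≤ f w) ∧ ∑ w, f w = 1 := by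
  obtain ⟨⟨F, hF, hs⟩, h0, h1⟩ := hf
  exact ⟨⟨F, hF.2, hs⟩, h0, h1⟩

/-! ### the basic points -/

theorem delta_u_memD :
    (∃ F, restrictC (indepFaces c.G) {w | w ≠ c.v} F ∧ ∀ w, deltaFn c.u w ≠ 0 → w ∈ F) ∧
      (∀ w, 0 ≤ deltaFn c.u w) ∧ ∑ w, deltaFn c.u w = 1 := by
  refine ⟨mem_restrict_of ?_ ?_, deltaFn_nonneg c.u, deltaFn_sum c.u⟩
  · intro w hw; rw [deltaFn_support hw]; exact cuv c
  · intro a b ha hb hadj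
    rw [deltaFn_support ha, deltaFn_support hb] at hadj
    exact c.G.irrefl hadj

theorem delta_u_memX :
    (∃ F, indepFaces c.G F ∧ ∀ w, deltaFn c.u w ≠ 0 → w ∈ F) ∧
      (∀ w, 0 ≤ deltaFn c.u w) ∧ ∑ w, deltaFn c.u w = 1 :=
  memX_of_memD c (delta_u_memD c)

theorem delta_v_memX :
    (∃ F, indepFaces c.G F ∧ ∀ w, deltaFn c.v w ≠ 0 → w ∈ F) ∧
      (∀ w, 0 ≤ deltaFn c.v w) ∧ ∑ w, deltaFn c.v w = 1 := by
  refine ⟨mem_indep_of ?_, deltaFn_nonneg c.v, deltaFn_sum c.v⟩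
  intro a b ha hb hadj
  rw [deltaFn_support ha, deltaFn_support hb] at hadj
  exact c.G.irrefl hadj

def puD : XD c := ⟨deltaFn c.u, delta_u_memD c⟩
def uX : XX c := ⟨deltaFn c.u, delta_u_memX c⟩
def vX : XX c := ⟨deltaFn c.v, delta_v_memX c⟩
def qL : SL c := Quot.mk _ (Sum.inr false)

abbrev WW := Wedge (XD c) (SL c) (puD c) (qL c)


/-! ### the basic maps on coordinates -/

def AfnX (f : V → ℝ) : V → ℝ :=
  mixFn c.u c.v f (2 * f c.v) 0 ((1 - 2 * f c.v) / (1 - f c.v))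

theorem Afn_memD (f : XX c) (ht : f.1 c.v ≤ 1/2) :
    (∃ F, restrictC (indepFaces c.G) {w | w ≠ c.v} F ∧ ∀ w, AfnX c f.1 w ≠ 0 → w ∈ F) ∧
      (∀ w, 0 ≤ AfnX c f.1 w) ∧ ∑ w, AfnX c f.1 w = 1 := by
  have h0 := f.2.2.1
  have hv0 : (0:ℝ) ≤ f.1 c.v := h0 c.v
  have h1t : (0:ℝ) < 1 - f.1 c.v := by linarith
  have hind := indepA c.hN (XX_ind c f)
    (α := 2 * f.1 c.v) (γ := (1 - 2 * f.1 c.v) / (1 - f.1 c.v))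
    (fun hα => by intro hc; rw [hc] at hα; norm_num at hα)
  unfold AfnX
  refine ⟨mem_restrict_of ?_ hind, ?_, ?_⟩
  · intro w hw
    rcases mixFn_support hw with ⟨_, hβ⟩ | ⟨hwv, _, _⟩ | ⟨hwu, _⟩
    · exact absurd rfl hβ
    · exact hwv
    · rw [hwu]; exact cuv c
  · exact mixFn_nonneg h0 (by linarith) le_rfl (div_nonneg (by linarith) h1t.le)
  · rw [mixFn_sum (cuv c) f.2.2.2]
    field_simp
    ring

def gfn (f : V → ℝ) : V → ℝ := mixFn c.u c.v f 0 0 (1 / (1 - f c.v))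

theorem gfn_memL (f : XX c) (half : 1/2 ≤ f.1 c.v) (h1 : f.1 c.v < 1) :
    (∃ F, restrictC (indepFaces c.G) {w | w ≠ c.v ∧ ¬ c.G.Adj c.v w} F ∧
        ∀ w, gfn c f.1 w ≠ 0 → w ∈ F) ∧
      (∀ w, 0 ≤ gfn c f.1 w) ∧ ∑ w, gfn c f.1 w = 1 := by
  have h0 := f.2.2.1
  have h1t : (0:ℝ) < 1 - f.1 c.v := by linarith
  have hv : f.1 c.v ≠ 0 := by intro hc; rw [hc] at half; norm_num at half
  have hind := indepA c.hN (XX_ind c f) (α := 0) (γ := 1 / (1 - f.1 c.v))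
    (fun hα => absurd rfl hα)
  unfold gfn
  refine ⟨mem_restrict_of ?_ hind, ?_, ?_⟩
  · intro w hw
    rcases mixFn_support hw with ⟨_, hβ⟩ | ⟨hwv, _, hfw⟩ | ⟨_, hα⟩
    · exact absurd rfl hβ
    · exact ⟨hwv, fun hadj => XX_ind c f c.v w hv hfw hadj⟩
    · exact absurd rfl hα
  · exact mixFn_nonneg h0 le_rfl le_rfl (by positivity)
  · rw [mixFn_sum (cuv c) f.2.2.2]
    field_simp
    ring

def P2fn (f : V → ℝ) (s : ℝ) : V → ℝ :=
  mixFn c.u c.v f (3*(1-s) - 4*f c.v) 0 ((1 - (3*(1-s) - 4*f c.v)) / (1 - f c.v))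

theorem P2_memX (f : XX c) (s : ℝ) (hs0 : 0 ≤ s) (hs1 : s ≤ 1)
    (ha : (1-s)/2 ≤ f.1 c.v) (hb : f.1 c.v ≤ 3*(1-s)/4) :
    (∃ F, indepFaces c.G F ∧ ∀ w, P2fn c f.1 s w ≠ 0 → w ∈ F) ∧
      (∀ w, 0 ≤ P2fn c f.1 s w) ∧ ∑ w, P2fn c f.1 s w = 1 := by
  have h0 := f.2.2.1
  have hv0 : (0:ℝ) ≤ f.1 c.v := h0 c.v
  have h1t : (0:ℝ) < 1 - f.1 c.v := by linarith
  have hα0 : (0:ℝ) ≤ 3*(1-s) - 4*f.1 c.v := by linarith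
  have hα1 : 3*(1-s) - 4*f.1 c.v ≤ 1 := by linarith
  have hind := indepA c.hN (XX_ind c f)
    (α := 3*(1-s) - 4*f.1 c.v) (γ := (1 - (3*(1-s) - 4*f.1 c.v)) / (1 - f.1 c.v))
    (by
      intro hα hc
      rw [hc] at ha hα
      have hs : s = 1 := by linarith
      rw [hs] at hα
      norm_num at hα)
  unfold P2fn
  refine ⟨mem_indep_of hind, ?_, ?_⟩
  · exact mixFn_nonneg h0 hα0 le_rfl (div_nonneg (by linarith) h1t.le)
  · rw [mixFn_sum (cuv c) f.2.2.2]
    field_simp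
    ring

def P3fn (f : V → ℝ) (s : ℝ) : V → ℝ :=
  mixFn c.u c.v f 0 ((f c.v - 3*(1-s)/4) / (1 - 3*(1-s)/4)) (1 / (1 - 3*(1-s)/4))

theorem P3_memX (f : XX c) (s : ℝ) (hs0 : 0 ≤ s) (hs1 : s ≤ 1)
    (hb : 3*(1-s)/4 ≤ f.1 c.v) :
    (∃ F, indepFaces c.G F ∧ ∀ w, P3fn c f.1 s w ≠ 0 → w ∈ F) ∧
      (∀ w, 0 ≤ P3fn c f.1 s w) ∧ ∑ w, P3fn c f.1 s w = 1 := by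
  have h0 := f.2.2.1
  have hv0 : (0:ℝ) ≤ f.1 c.v := h0 c.v
  have hb0 : (0:ℝ) ≤ 3*(1-s)/4 := by linarith
  have hib : (0:ℝ) < 1 - 3*(1-s)/4 := by linarith
  have hne : (1 - 3*(1-s)/4) ≠ 0 := ne_of_gt hib
  have hind := indepC (u := c.u) (v := c.v) (XX_ind c f)
    (β := (f.1 c.v - 3*(1-s)/4) / (1 - 3*(1-s)/4)) (γ := 1 / (1 - 3*(1-s)/4))
    (by
      intro hβ hc
      rw [hc] at hb hβ
      have : 3*(1-s)/4 = 0 := le_antisymm hb hb0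
      rw [this] at hβ
      norm_num at hβ)
  unfold P3fn
  refine ⟨mem_indep_of hind, ?_, ?_⟩
  · exact mixFn_nonneg h0 le_rfl (div_nonneg (by linarith) hib.le) (by positivity)
  · rw [mixFn_sum (cuv c) f.2.2.2]
    have h13 : (0:ℝ) < 1 + s*3 := by linarith
    field_simp [h13.ne']
    rw [add_zero, div_eq_one_iff_eq (ne_of_gt (by linarith : (0:ℝ) < 4 - 3*(1-s)))]
    ring

def mfn (g : V → ℝ) (s : ℝ) : V → ℝ :=
  mixFn c.u c.v g (max 0 (1 - 2*s)) (max 0 (2*s - 1)) (1 - |2*s - 1|)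

theorem m_memX (g : XL c) (s : ℝ) (hs0 : 0 ≤ s) (hs1 : s ≤ 1) :
    (∃ F, indepFaces c.G F ∧ ∀ w, mfn c g.1 s w ≠ 0 → w ∈ F) ∧
      (∀ w, 0 ≤ mfn c g.1 s w) ∧ ∑ w, mfn c g.1 s w = 1 := by
  have h0 := g.2.2.1
  have habs : |2*s - 1| ≤ 1 := abs_le.mpr ⟨by linarith, by linarith⟩
  have hind := indepB c.hN (XL_ind c g) (XL_set c g)
    (α := max 0 (1 - 2*s)) (β := max 0 (2*s - 1)) (γ := 1 - |2*s - 1|)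
    (by
      rintro ⟨hα, hβ⟩
      rcases le_or_gt s (1/2) with hs | hs
      · exact hβ (max_eq_left (by linarith))
      · exact hα (max_eq_left (by linarith)))
  unfold mfn
  refine ⟨mem_indep_of hind, ?_, ?_⟩
  · exact mixFn_nonneg h0 (le_max_left _ _) (le_max_left _ _) (by linarith)
  · rw [mixFn_sum (cuv c) g.2.2.2, XL_v c g]
    rcases le_or_gt s (1/2) with hs | hs
    · rw [max_eq_left (by linarith : 2*s - 1 ≤ 0), max_eq_right (by linarith : (0:ℝ) ≤ 1 - 2*s),
        abs_of_nonpos (by linarith : 2*s - 1 ≤ 0)]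
      ring
    · rw [max_eq_right (by linarith : (0:ℝ) ≤ 2*s - 1), max_eq_left (by linarith : 1 - 2*s ≤ 0),
        abs_of_nonneg (by linarith : (0:ℝ) ≤ 2*s - 1)]
      ring

def kfn (g : V → ℝ) (s τ : ℝ) : V → ℝ :=
  mixFn c.u c.v g (1 - max 0 (min (2*s) (3*(1-τ) - 4*s))) 0 (max 0 (min (2*s) (3*(1-τ) - 4*s)))

theorem kgamma_le_one {s τ : ℝ} (hs0 : 0 ≤ s) (hτ0 : 0 ≤ τ) (hτ1 : τ ≤ 1) :
    max 0 (min (2*s) (3*(1-τ) - 4*s)) ≤ 1 := by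
  rcases le_total (2*s) (3*(1-τ) - 4*s) with hm | hm
  · rw [min_eq_left hm]
    apply max_le (by norm_num)
    linarith
  · rw [min_eq_right hm]
    apply max_le (by norm_num)
    linarith

theorem k_memD (g : XL c) (s τ : ℝ) (hs0 : 0 ≤ s) (hτ0 : 0 ≤ τ) (hτ1 : τ ≤ 1) :
    (∃ F, restrictC (indepFaces c.G) {w | w ≠ c.v} F ∧ ∀ w, kfn c g.1 s τ w ≠ 0 → w ∈ F) ∧
      (∀ w, 0 ≤ kfn c g.1 s τ w) ∧ ∑ w, kfn c g.1 s τ w = 1 := by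
  have h0 := g.2.2.1
  have hγ0 : (0:ℝ) ≤ max 0 (min (2*s) (3*(1-τ) - 4*s)) := le_max_left _ _
  have hγ1 := kgamma_le_one hs0 hτ0 hτ1
  have hind := indepB c.hN (XL_ind c g) (XL_set c g)
    (α := 1 - max 0 (min (2*s) (3*(1-τ) - 4*s))) (β := 0)
    (γ := max 0 (min (2*s) (3*(1-τ) - 4*s)))
    (by rintro ⟨_, hβ⟩; exact hβ rfl)
  unfold kfn
  refine ⟨mem_restrict_of ?_ hind, ?_, ?_⟩
  · intro w hw
    rcases mixFn_support hw with ⟨_, hβ⟩ | ⟨hwv, _, _⟩ | ⟨hwu, _⟩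
    · exact absurd rfl hβ
    · exact hwv
    · rw [hwu]; exact cuv c
  · exact mixFn_nonneg h0 (by linarith) le_rfl hγ0
  · rw [mixFn_sum (cuv c) g.2.2.2, XL_v c g]
    ring

def cfn (g : V → ℝ) (s : ℝ) : V → ℝ := mixFn c.u c.v g 0 ((1+s)/2) ((1-s)/2)

theorem c_memX (g : XL c) (s : ℝ) (hs0 : 0 ≤ s) (hs1 : s ≤ 1) :
    (∃ F, indepFaces c.G F ∧ ∀ w, cfn c g.1 s w ≠ 0 → w ∈ F) ∧
      (∀ w, 0 ≤ cfn c g.1 s w) ∧ ∑ w, cfn c g.1 s w = 1 := by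
  have h0 := g.2.2.1
  have hind := indepB c.hN (XL_ind c g) (XL_set c g)
    (α := 0) (β := (1+s)/2) (γ := (1-s)/2)
    (by rintro ⟨hα, _⟩; exact hα rfl)
  unfold cfn
  refine ⟨mem_indep_of hind, ?_, ?_⟩
  · exact mixFn_nonneg h0 le_rfl (by linarith) (by linarith)
  · rw [mixFn_sum (cuv c) g.2.2.2, XL_v c g]
    ring


/-! ### continuity of mixFn families -/

theorem continuous_mixFn {P : Type} [TopologicalSpace P] {u v : V} {f : P → V → ℝ}
    {α β γ : P → ℝ} (hf : Continuous f) (hα : Continuous α) (hβ : Continuous β)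
    (hγ : Continuous γ) :
    Continuous fun p => mixFn u v (f p) (α p) (β p) (γ p) := by
  apply continuous_pi
  intro w
  unfold mixFn
  have hfw : Continuous fun p => f p w := (continuous_apply w).comp hf
  by_cases hv : w = v <;> by_cases hu : w = u <;>
    simp only [hv, hu, if_pos, if_neg, if_true] <;> continuity

/-! ### the map ψ -/

theorem mfn_zero (g : V → ℝ) : mfn c g 0 = deltaFn c.u := by
  have : mfn c g 0 = mixFn c.u c.v g 1 0 0 := by
    unfold mfn
    apply mixFn_congr <;> norm_num
  rw [this, mixFn_100 (cuv c)]

theorem mfn_one (g : V → ℝ) (hgv : g c.v = 0) : mfn c g 1 = deltaFn c.v := by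
  funext w
  unfold mfn mixFn deltaFn
  rcases eq_or_ne w c.v with rfl | hv
  · rw [if_pos rfl, if_neg (fun hc : c.v = c.u => (cuv c) hc.symm)]
    norm_num
  · rw [if_neg hv]
    have h1 : (1:ℝ) - |2*1 - 1| = 0 := by norm_num
    rcases eq_or_ne w c.u with rfl | hu
    · rw [if_pos rfl, if_neg hv]
      norm_num
    · rw [if_neg hu, if_neg hv]
      norm_num

def psiD : XD c → XX c := fun d => ⟨d.1, memX_of_memD c d.2⟩

def psiM : XL c × unitInterval → XX c := fun p =>
  ⟨mfn c p.1.1 p.2.1, m_memX c p.1 p.2.1 p.2.2.1 p.2.2.2⟩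

theorem psiM_zero (g : XL c) : psiM c (g, 0) = uX c :=
  Subtype.ext (mfn_zero c g.1)

theorem psiM_one (g : XL c) : psiM c (g, 1) = vX c :=
  Subtype.ext (mfn_one c g.1 (XL_v c g))

def psiS : SL c → XX c :=
  Quot.lift (Sum.elim (psiM c) (fun b => if b then vX c else uX c)) (by
    rintro (⟨g, s⟩ | b) (⟨g', s'⟩ | b') hrel
    · exact absurd hrel not_false
    · rcases hrel with ⟨hs, hb⟩ | ⟨hs, hb⟩
      · subst hs; subst hb
        exact psiM_zero c g
      · subst hs; subst hb
        exact psiM_one c g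
    · exact absurd hrel not_false
    · exact absurd hrel not_false)

def psiW : WW c → XX c :=
  Quot.lift (Sum.elim (psiD c) (psiS c)) (by
    rintro p q ⟨rfl, rfl⟩
    exact Subtype.ext rfl)

theorem continuous_psiM : Continuous (psiM c) := by
  apply Continuous.subtype_mk
  have hg : Continuous fun p : XL c × unitInterval => (p.1.1 : V → ℝ) :=
    continuous_subtype_val.comp continuous_fst
  have hs : Continuous fun p : XL c × unitInterval => (p.2.1 : ℝ) :=
    continuous_subtype_val.comp continuous_snd
  refine continuous_mixFn hg ?_ ?_ ?_
  · exact continuous_const.max (continuous_const.sub (continuous_const.mul hs))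
  · exact continuous_const.max ((continuous_const.mul hs).sub continuous_const)
  · exact continuous_const.sub ((continuous_const.mul hs).sub continuous_const).abs

theorem continuous_psiS : Continuous (psiS c) := by
  apply continuous_quot_lift
  apply Continuous.sumElim (continuous_psiM c)
  exact continuous_of_discreteTopology

theorem continuous_psiW : Continuous (psiW c) := by
  apply continuous_quot_lift
  apply Continuous.sumElim ?_ (continuous_psiS c)
  exact Continuous.subtype_mk continuous_subtype_val _

def psiCM : C(WW c, XX c) := ⟨psiW c, continuous_psiW c⟩


/-! ### the map φ -/

def C2set : Set (XX c) := {f | 1/2 ≤ f.1 c.v}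

theorem C2set_mem (x : C2set c) : (1:ℝ)/2 ≤ x.1.1 c.v := x.2

def phi2 : C2set c → SL c := fun x =>
  if h1 : x.1.1 c.v < 1 then
    Quot.mk _ (Sum.inl (⟨gfn c x.1.1, gfn_memL c x.1 (C2set_mem c x) h1⟩,
      ⟨2 * x.1.1 c.v - 1, Set.mem_Icc.mpr ⟨by linarith [C2set_mem c x], by linarith⟩⟩))
  else Quot.mk _ (Sum.inr true)

theorem cfn_v (g : V → ℝ) (s : ℝ) : cfn c g s c.v = (1+s)/2 := by
  unfold cfn
  exact mixFn_v (cuv c) g _ _ _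

theorem vX_v : (vX c).1 c.v = 1 := by
  show deltaFn c.v c.v = 1
  unfold deltaFn
  rw [if_pos rfl]

def cMap : (XL c × unitInterval) ⊕ PUnit → C2set c :=
  Sum.elim
    (fun p => ⟨⟨cfn c p.1.1 p.2.1, c_memX c p.1 p.2.1 p.2.2.1 p.2.2.2⟩,
      by
        show (1:ℝ)/2 ≤ cfn c p.1.1 p.2.1 c.v
        rw [cfn_v c]
        linarith [p.2.2.1]⟩)
    (fun _ => ⟨vX c, by show (1:ℝ)/2 ≤ (vX c).1 c.v; rw [vX_v c]; norm_num⟩)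

theorem gfn_v (f : V → ℝ) : gfn c f c.v = 0 := by
  unfold gfn
  exact mixFn_v (cuv c) f _ _ _

theorem gfn_cfn (g : XL c) (s : ℝ) (hs1 : s < 1) : gfn c (cfn c g.1 s) = g.1 := by
  have hv := cfn_v c g.1 s
  have h2 : (1:ℝ) - s ≠ 0 := by intro hc; rw [sub_eq_zero] at hc; linarith
  funext w
  rcases eq_or_ne w c.v with rfl | hwv
  · rw [gfn_v c, XL_v c g]
  · have hw : cfn c g.1 s w = (1-s)/2 * g.1 w := by
      rcases eq_or_ne w c.u with rfl | hwu
      · unfold cfn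
        rw [mixFn_u (cuv c)]
        ring
      · unfold cfn
        rw [mixFn_w hwv hwu]
    have hg : gfn c (cfn c g.1 s) w = (1/(1 - (1+s)/2)) * ((1-s)/2 * g.1 w) := by
      rcases eq_or_ne w c.u with rfl | hwu
      · unfold gfn
        rw [mixFn_u (cuv c), hv, hw]
        ring
      · unfold gfn
        rw [mixFn_w hwv hwu, hv, hw]
    rw [hg]
    rw [show (1:ℝ) - (1+s)/2 = (1-s)/2 by ring, one_div,
      inv_mul_cancel_left₀ (by intro hc; apply h2; linarith [hc] : (1-s)/2 ≠ 0)]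

theorem cMap_surj : Function.Surjective (cMap c) := by
  intro x
  rcases lt_or_ge (x.1.1 c.v) 1 with h1 | h1
  · refine ⟨Sum.inl (⟨gfn c x.1.1, gfn_memL c x.1 (C2set_mem c x) h1⟩,
      ⟨2 * x.1.1 c.v - 1, Set.mem_Icc.mpr ⟨by linarith [C2set_mem c x], by linarith⟩⟩), ?_⟩
    apply Subtype.ext
    apply Subtype.ext
    show cfn c (gfn c x.1.1) (2 * x.1.1 c.v - 1) = x.1.1
    funext w
    rcases eq_or_ne w c.v with rfl | hv
    · rw [cfn_v c]; ring
    · unfold cfn gfn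
      rw [mixFn_alpha0, if_neg hv, mixFn_alpha0, if_neg hv]
      have hne : 1 - x.1.1 c.v ≠ 0 := by intro hc; rw [sub_eq_zero] at hc; linarith
      field_simp
      ring
  · have ht1 : x.1.1 c.v = 1 := le_antisymm (coord_le_one c x.1 c.v) h1
    refine ⟨Sum.inr PUnit.unit, ?_⟩
    apply Subtype.ext
    apply Subtype.ext
    show (deltaFn c.v : V → ℝ) = x.1.1
    exact (eq_deltaFn_of_coord_one x.1.2.2.1 x.1.2.2.2 ht1).symm

theorem phi2_cMap (a : (XL c × unitInterval) ⊕ PUnit) :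
    phi2 c (cMap c a) =
      Sum.elim (fun p => Quot.mk _ (Sum.inl p)) (fun _ => Quot.mk _ (Sum.inr true)) a := by
  rcases a with ⟨g, s⟩ | a
  · show phi2 c _ = Quot.mk _ (Sum.inl (g, s))
    have hval : (cMap c (Sum.inl (g, s))).1.1 c.v = (1 + s.1)/2 := cfn_v c g.1 s.1
    unfold phi2
    rcases lt_or_ge s.1 1 with hs | hs
    · rw [dif_pos (by rw [hval]; linarith)]
      apply congrArg
      apply congrArg
      refine Prod.ext ?_ ?_
      · exact Subtype.ext (by exact gfn_cfn c g s.1 hs)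
      · apply Subtype.ext
        show 2 * (cMap c (Sum.inl (g, s))).1.1 c.v - 1 = s.1
        rw [hval]; ring
    · have hs1 : s.1 = 1 := le_antisymm s.2.2 hs
      rw [dif_neg (by rw [hval]; linarith)]
      refine Eq.symm (Quot.sound ?_)
      exact Or.inr ⟨Subtype.ext hs1, rfl⟩
  · show phi2 c _ = Quot.mk _ (Sum.inr true)
    unfold phi2
    rw [dif_neg (by show ¬ ((vX c).1 c.v < 1); rw [vX_v c]; norm_num)]

theorem continuous_cMap : Continuous (cMap c) := by
  apply Continuous.sumElim
  · apply Continuous.subtype_mk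
    apply Continuous.subtype_mk
    have hg : Continuous fun p : XL c × unitInterval => (p.1.1 : V → ℝ) :=
      continuous_subtype_val.comp continuous_fst
    have hs : Continuous fun p : XL c × unitInterval => (p.2.1 : ℝ) :=
      continuous_subtype_val.comp continuous_snd
    exact continuous_mixFn hg continuous_const
      (continuous_const.add hs |>.div_const 2)
      (continuous_const.sub hs |>.div_const 2)
  · exact continuous_const

theorem continuous_phi2 : Continuous (phi2 c) := by
  refine descend (continuous_cMap c) (cMap_surj c) ?_ (phi2_cMap c)
  apply Continuous.sumElim
  · exact continuous_quot_mk.comp continuous_inl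
  · exact continuous_const

def phiFn : XX c → WW c := fun f =>
  if h1 : f.1 c.v ≤ 1/2 then Quot.mk _ (Sum.inl ⟨AfnX c f.1, Afn_memD c f h1⟩)
  else Quot.mk _ (Sum.inr (phi2 c ⟨f, (not_le.mp h1).le⟩))

theorem Afn_zero (f : V → ℝ) (hv : f c.v = 0) : AfnX c f = f := by
  funext w
  rcases eq_or_ne w c.v with rfl | h
  · unfold AfnX
    rw [mixFn_v (cuv c), hv]
  · unfold AfnX
    rcases eq_or_ne w c.u with rfl | hu
    · rw [mixFn_u (cuv c), hv]
      norm_num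
    · rw [mixFn_w h hu, hv]
      norm_num

theorem Afn_half (f : V → ℝ) (hv : f c.v = 1/2) : AfnX c f = deltaFn c.u := by
  have e : AfnX c f = mixFn c.u c.v f 1 0 0 := by
    unfold AfnX
    rw [hv]
    apply mixFn_congr <;> norm_num
  rw [e, mixFn_100 (cuv c)]

theorem phi2_at_half (x : C2set c) (hv : x.1.1 c.v = 1/2) : phi2 c x = qL c := by
  unfold phi2
  rw [dif_pos (by rw [hv]; norm_num)]
  refine Quot.sound (Or.inl ⟨Subtype.ext ?_, rfl⟩)
  show 2 * x.1.1 c.v - 1 = ((0 : unitInterval) : ℝ)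
  rw [hv]
  norm_num

theorem phi_glue (x : C2set c) : phiFn c x.1 = Quot.mk _ (Sum.inr (phi2 c x)) := by
  unfold phiFn
  by_cases h1 : x.1.1 c.v ≤ 1/2
  · have hv : x.1.1 c.v = 1/2 := le_antisymm h1 (C2set_mem c x)
    rw [dif_pos h1]
    have e1 : (⟨AfnX c x.1.1, Afn_memD c x.1 h1⟩ : XD c) = puD c :=
      Subtype.ext (Afn_half c _ hv)
    rw [e1, phi2_at_half c x hv]
    exact Quot.sound ⟨rfl, rfl⟩
  · rw [dif_neg h1]

theorem continuous_phiFn : Continuous (phiFn c) := by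
  have heval : Continuous fun f : XX c => f.1 c.v :=
    (continuous_apply c.v).comp continuous_subtype_val
  refine glue2 (C1 := {f : XX c | f.1 c.v ≤ 1/2}) (C2 := C2set c) ?_ ?_ ?_
    (f1 := fun x => Quot.mk _ (Sum.inl ⟨AfnX c x.1.1, Afn_memD c x.1 x.2⟩)) ?_
    (f2 := fun x => Quot.mk _ (Sum.inr (phi2 c x))) ?_ ?_ ?_
  · ext f
    simp only [Set.mem_union, Set.mem_setOf_eq, Set.mem_univ, iff_true]
    rcases le_or_gt (f.1 c.v) (1/2) with h | h
    · exact Or.inl h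
    · exact Or.inr h.le
  · exact IsClosed.preimage heval isClosed_Iic
  · exact IsClosed.preimage heval isClosed_Ici
  · refine (continuous_quot_mk.comp continuous_inl).comp ?_
    apply Continuous.subtype_mk
    have hf : Continuous fun x : {f : XX c | f.1 c.v ≤ 1/2} => (x.1.1 : V → ℝ) :=
      continuous_subtype_val.comp continuous_subtype_val
    have ht : Continuous fun x : {f : XX c | f.1 c.v ≤ 1/2} => x.1.1 c.v :=
      (continuous_apply c.v).comp hf
    refine continuous_mixFn hf (continuous_const.mul ht) continuous_const ?_
    refine Continuous.div (continuous_const.sub (continuous_const.mul ht))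
      (continuous_const.sub ht) ?_
    intro x
    have hx := x.2
    simp only [Set.mem_setOf_eq] at hx
    intro hc
    rw [sub_eq_zero] at hc
    rw [← hc] at hx
    norm_num at hx
  · exact (continuous_quot_mk.comp continuous_inr).comp (continuous_phi2 c)
  · intro x
    exact dif_pos x.2
  · exact phi_glue c

def phiCM : C(XX c, WW c) := ⟨phiFn c, continuous_phiFn c⟩


/-! ### the homotopy H : ψ ∘ φ ≃ id on X -/

def Hfn : XX c × unitInterval → XX c := fun p =>
  if h1 : p.1.1 c.v ≤ (1 - p.2.1)/2 then
    ⟨AfnX c p.1.1, memX_of_memD c (Afn_memD c p.1 (le_trans h1 (by linarith [p.2.2.1])))⟩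
  else if h2 : p.1.1 c.v ≤ 3*(1 - p.2.1)/4 then
    ⟨P2fn c p.1.1 p.2.1, P2_memX c p.1 p.2.1 p.2.2.1 p.2.2.2 (not_le.mp h1).le h2⟩
  else
    ⟨P3fn c p.1.1 p.2.1, P3_memX c p.1 p.2.1 p.2.2.1 p.2.2.2 (not_le.mp h2).le⟩

theorem Afn_eq_P2 (f : V → ℝ) (s : ℝ) (hb : f c.v = (1 - s)/2) :
    AfnX c f = P2fn c f s := by
  unfold AfnX P2fn
  apply mixFn_congr
  · rw [hb]; ring
  · rfl
  · rw [hb]; ring_nf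

theorem P2_eq_P3 (f : V → ℝ) (s : ℝ) (hb : f c.v = 3*(1 - s)/4) :
    P2fn c f s = P3fn c f s := by
  unfold P2fn P3fn
  apply mixFn_congr
  · rw [hb]; ring
  · rw [hb]; ring_nf
  · rw [hb]; ring_nf

theorem Afn_eq_P3_deg (f : V → ℝ) (hv : f c.v = 0) : AfnX c f = P3fn c f 1 := by
  unfold AfnX P3fn
  apply mixFn_congr
  · rw [hv]; ring
  · rw [hv]; norm_num
  · rw [hv]; norm_num

theorem continuous_Hfn : Continuous (Hfn c) := by
  have hf : Continuous fun p : XX c × unitInterval => (p.1.1 : V → ℝ) :=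
    continuous_subtype_val.comp continuous_fst
  have ht : Continuous fun p : XX c × unitInterval => p.1.1 c.v :=
    (continuous_apply c.v).comp hf
  have hs : Continuous fun p : XX c × unitInterval => (p.2.1 : ℝ) :=
    continuous_subtype_val.comp continuous_snd
  refine glue3 (φ := Hfn c)
    (C1 := {p : XX c × unitInterval | p.1.1 c.v ≤ (1 - p.2.1)/2})
    (C2 := {p : XX c × unitInterval | (1 - p.2.1)/2 ≤ p.1.1 c.v ∧ p.1.1 c.v ≤ 3*(1 - p.2.1)/4})
    (C3 := {p : XX c × unitInterval | 3*(1 - p.2.1)/4 ≤ p.1.1 c.v})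
    ?_ ?_ ?_ ?_
    (f1 := fun x => ⟨AfnX c x.1.1.1,
      memX_of_memD c (Afn_memD c x.1.1 (le_trans x.2 (by linarith [x.1.2.2.1])))⟩) ?_
    (f2 := fun x => ⟨P2fn c x.1.1.1 x.1.2.1,
      P2_memX c x.1.1 x.1.2.1 x.1.2.2.1 x.1.2.2.2 x.2.1 x.2.2⟩) ?_
    (f3 := fun x => ⟨P3fn c x.1.1.1 x.1.2.1,
      P3_memX c x.1.1 x.1.2.1 x.1.2.2.1 x.1.2.2.2 x.2⟩) ?_
    ?_ ?_ ?_
  · ext p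
    simp only [Set.mem_union, Set.mem_setOf_eq, Set.mem_univ, iff_true]
    rcases le_or_gt (p.1.1 c.v) ((1 - p.2.1)/2) with h | h
    · exact Or.inl (Or.inl h)
    · rcases le_or_gt (p.1.1 c.v) (3*(1 - p.2.1)/4) with h' | h'
      · exact Or.inl (Or.inr ⟨h.le, h'⟩)
      · exact Or.inr h'.le
  · exact isClosed_le ht ((continuous_const.sub hs).div_const 2)
  · exact (isClosed_le ((continuous_const.sub hs).div_const 2) ht).inter
      (isClosed_le ht ((continuous_const.mul (continuous_const.sub hs)).div_const 4))
  · exact isClosed_le ((continuous_const.mul (continuous_const.sub hs)).div_const 4) ht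
  · -- continuity of the A piece on C1
    apply Continuous.subtype_mk
    have hf1 : Continuous fun x : {p : XX c × unitInterval | p.1.1 c.v ≤ (1 - p.2.1)/2} =>
        (x.1.1.1 : V → ℝ) := hf.comp continuous_subtype_val
    have ht1 : Continuous fun x : {p : XX c × unitInterval | p.1.1 c.v ≤ (1 - p.2.1)/2} =>
        x.1.1.1 c.v := ht.comp continuous_subtype_val
    refine continuous_mixFn hf1 (continuous_const.mul ht1) continuous_const ?_
    refine Continuous.div (continuous_const.sub (continuous_const.mul ht1))
      (continuous_const.sub ht1) ?_
    intro x
    have hx := x.2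
    have hss := x.1.2.2.1
    simp only [Set.mem_setOf_eq] at hx
    intro hcon
    rw [sub_eq_zero] at hcon
    have : x.1.1.1 c.v ≤ 1/2 := le_trans hx (by linarith)
    rw [← hcon] at this
    norm_num at this
  · -- continuity of the P2 piece on C2
    apply Continuous.subtype_mk
    have hsub : Continuous fun x : {p : XX c × unitInterval |
        (1 - p.2.1)/2 ≤ p.1.1 c.v ∧ p.1.1 c.v ≤ 3*(1 - p.2.1)/4} => x.1 :=
      continuous_subtype_val
    have hf2 : Continuous fun x : {p : XX c × unitInterval |
        (1 - p.2.1)/2 ≤ p.1.1 c.v ∧ p.1.1 c.v ≤ 3*(1 - p.2.1)/4} => (x.1.1.1 : V → ℝ) :=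
      hf.comp hsub
    have ht2 : Continuous fun x : {p : XX c × unitInterval |
        (1 - p.2.1)/2 ≤ p.1.1 c.v ∧ p.1.1 c.v ≤ 3*(1 - p.2.1)/4} => x.1.1.1 c.v :=
      ht.comp hsub
    have hs2 : Continuous fun x : {p : XX c × unitInterval |
        (1 - p.2.1)/2 ≤ p.1.1 c.v ∧ p.1.1 c.v ≤ 3*(1 - p.2.1)/4} => (x.1.2.1 : ℝ) :=
      hs.comp hsub
    have halpha : Continuous fun x : {p : XX c × unitInterval |
        (1 - p.2.1)/2 ≤ p.1.1 c.v ∧ p.1.1 c.v ≤ 3*(1 - p.2.1)/4} =>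
        3*(1 - x.1.2.1) - 4*x.1.1.1 c.v :=
      (continuous_const.mul (continuous_const.sub hs2)).sub (continuous_const.mul ht2)
    refine continuous_mixFn hf2 halpha continuous_const ?_
    refine Continuous.div (continuous_const.sub halpha) (continuous_const.sub ht2) ?_
    intro x
    have hx := x.2.2
    have hss0 := x.1.2.2.1
    intro hcon
    rw [sub_eq_zero] at hcon
    have : x.1.1.1 c.v ≤ 3/4 := le_trans hx (by linarith)
    rw [← hcon] at this
    norm_num at this
  · -- continuity of the P3 piece on C3
    apply Continuous.subtype_mk
    have hsub : Continuous fun x : {p : XX c × unitInterval |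
        3*(1 - p.2.1)/4 ≤ p.1.1 c.v} => x.1 := continuous_subtype_val
    have hf3 : Continuous fun x : {p : XX c × unitInterval |
        3*(1 - p.2.1)/4 ≤ p.1.1 c.v} => (x.1.1.1 : V → ℝ) := hf.comp hsub
    have ht3 : Continuous fun x : {p : XX c × unitInterval |
        3*(1 - p.2.1)/4 ≤ p.1.1 c.v} => x.1.1.1 c.v := ht.comp hsub
    have hs3 : Continuous fun x : {p : XX c × unitInterval |
        3*(1 - p.2.1)/4 ≤ p.1.1 c.v} => (x.1.2.1 : ℝ) := hs.comp hsub
    have hbne : ∀ x : {p : XX c × unitInterval | 3*(1 - p.2.1)/4 ≤ p.1.1 c.v},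
        1 - 3*(1 - x.1.2.1)/4 ≠ 0 := by
      intro x
      have hss1 := x.1.2.2.1
      intro hcon
      rw [sub_eq_zero] at hcon
      nlinarith [hcon]
    have hbcont : Continuous fun x : {p : XX c × unitInterval |
        3*(1 - p.2.1)/4 ≤ p.1.1 c.v} => 1 - 3*(1 - x.1.2.1)/4 :=
      continuous_const.sub ((continuous_const.mul (continuous_const.sub hs3)).div_const 4)
    refine continuous_mixFn hf3 continuous_const ?_ ?_
    · exact Continuous.div (ht3.sub ((continuous_const.mul
        (continuous_const.sub hs3)).div_const 4)) hbcont hbne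
    · exact Continuous.div continuous_const hbcont hbne
  · intro x
    unfold Hfn
    exact dif_pos x.2
  · intro x
    unfold Hfn
    have hx2 : (1 - x.1.2.1)/2 ≤ x.1.1.1 c.v := x.2.1
    have hx3 : x.1.1.1 c.v ≤ 3*(1 - x.1.2.1)/4 := x.2.2
    by_cases h1 : x.1.1.1 c.v ≤ (1 - x.1.2.1)/2
    · rw [dif_pos h1]
      exact Subtype.ext (Afn_eq_P2 c _ _ (le_antisymm h1 hx2))
    · rw [dif_neg h1, dif_pos hx3]
  · intro x
    unfold Hfn
    by_cases h1 : x.1.1.1 c.v ≤ (1 - x.1.2.1)/2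
    · rw [dif_pos h1]
      have hs1 : x.1.2.1 = 1 := by
        have := x.2
        simp only [Set.mem_setOf_eq] at this
        have h0 := x.1.1.2.2.1 c.v
        have hs1' := x.1.2.2.2
        nlinarith
      have hv0 : x.1.1.1 c.v = 0 := by
        have := x.2
        simp only [Set.mem_setOf_eq] at this
        have h0 := x.1.1.2.2.1 c.v
        nlinarith [h1]
      refine Subtype.ext ?_
      show AfnX c (x.1.1.1) = P3fn c (x.1.1.1) (x.1.2.1)
      rw [Afn_eq_P3_deg c _ hv0, hs1]
    · by_cases h2 : x.1.1.1 c.v ≤ 3*(1 - x.1.2.1)/4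
      · rw [dif_neg h1, dif_pos h2]
        have hx3 : 3*(1 - x.1.2.1)/4 ≤ x.1.1.1 c.v := x.2
        exact Subtype.ext (P2_eq_P3 c _ _ (le_antisymm h2 hx3))
      · rw [dif_neg h1, dif_neg h2]


theorem I0 : ((0 : unitInterval) : ℝ) = 0 := rfl
theorem I1 : ((1 : unitInterval) : ℝ) = 1 := rfl

theorem gfn_ne_v {w : V} (hw : w ≠ c.v) (f : V → ℝ) :
    gfn c f w = (1/(1 - f c.v)) * f w := by
  rcases eq_or_ne w c.u with rfl | hu
  · unfold gfn
    rw [mixFn_u (cuv c)]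
    ring
  · unfold gfn
    rw [mixFn_w hw hu]

theorem P2_eq_m (f : XX c) (hhalf : 1/2 ≤ f.1 c.v) (h34 : f.1 c.v ≤ 3/4) :
    P2fn c f.1 0 = mfn c (gfn c f.1) (2 * f.1 c.v - 1) := by
  set t := f.1 c.v with htdef
  have hfu : f.1 c.u = 0 := fu0 c f (by intro hc; rw [← htdef] at hc; rw [hc] at hhalf; norm_num at hhalf)
  have htne : 1 - t ≠ 0 := by intro hc; rw [sub_eq_zero] at hc; rw [← hc] at h34; norm_num at h34
  have habs : |2*(2*t - 1) - 1| = 3 - 4*t := by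
    rw [abs_of_nonpos (by linarith)]
    ring
  funext w
  rcases eq_or_ne w c.v with rfl | hwv
  · unfold P2fn mfn
    rw [mixFn_v (cuv c), mixFn_v (cuv c), max_eq_left (by linarith : 2*(2*t-1) - 1 ≤ 0)]
  · rcases eq_or_ne w c.u with rfl | hwu
    · unfold P2fn mfn
      rw [mixFn_u (cuv c), mixFn_u (cuv c), gfn_ne_v c (cuv c) f.1, ← htdef, hfu,
        max_eq_right (by linarith : (0:ℝ) ≤ 1 - 2*(2*t-1))]
      ring
    · unfold P2fn mfn
      rw [mixFn_w hwv hwu, mixFn_w hwv hwu, gfn_ne_v c hwv f.1, ← htdef, habs]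
      field_simp
      ring

theorem P3_eq_m (f : XX c) (h34 : 3/4 ≤ f.1 c.v) (h1 : f.1 c.v < 1) :
    P3fn c f.1 0 = mfn c (gfn c f.1) (2 * f.1 c.v - 1) := by
  set t := f.1 c.v with htdef
  have hfu : f.1 c.u = 0 := fu0 c f (by intro hc; rw [← htdef] at hc; rw [hc] at h34; norm_num at h34)
  have htne : 1 - t ≠ 0 := by intro hc; rw [sub_eq_zero] at hc; rw [← hc] at h1; norm_num at h1
  have habs : |2*(2*t - 1) - 1| = 4*t - 3 := by
    rw [abs_of_nonneg (by linarith)]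
    ring
  funext w
  rcases eq_or_ne w c.v with rfl | hwv
  · unfold P3fn mfn
    rw [mixFn_v (cuv c), mixFn_v (cuv c), max_eq_right (by linarith : (0:ℝ) ≤ 2*(2*t-1) - 1)]
    rw [← htdef]
    norm_num
    field_simp
    ring
  · rcases eq_or_ne w c.u with rfl | hwu
    · unfold P3fn mfn
      rw [mixFn_u (cuv c), mixFn_u (cuv c), gfn_ne_v c (cuv c) f.1, ← htdef, hfu,
        max_eq_left (by linarith : 1 - 2*(2*t-1) ≤ 0)]
      ring
    · unfold P3fn mfn
      rw [mixFn_w hwv hwu, mixFn_w hwv hwu, gfn_ne_v c hwv f.1, ← htdef, habs]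
      field_simp
      ring

theorem P3_delta : P3fn c (deltaFn c.v) 0 = deltaFn c.v := by
  funext w
  rcases eq_or_ne w c.v with rfl | hwv
  · unfold P3fn
    rw [mixFn_v (cuv c)]
    unfold deltaFn
    rw [if_pos rfl]
    norm_num
  · have hdw : deltaFn c.v w = 0 := by unfold deltaFn; rw [if_neg hwv]
    rcases eq_or_ne w c.u with rfl | hwu
    · unfold P3fn
      rw [mixFn_u (cuv c), hdw]
      ring
    · unfold P3fn
      rw [mixFn_w hwv hwu, hdw]
      ring

theorem P3_one (f : V → ℝ) : P3fn c f 1 = f := by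
  funext w
  rcases eq_or_ne w c.v with rfl | hwv
  · unfold P3fn
    rw [mixFn_v (cuv c)]
    norm_num
  · rcases eq_or_ne w c.u with rfl | hwu
    · unfold P3fn
      rw [mixFn_u (cuv c)]
      norm_num
    · unfold P3fn
      rw [mixFn_w hwv hwu]
      norm_num

theorem H_zero (f : XX c) : Hfn c (f, 0) = psiW c (phiFn c f) := by
  by_cases h1 : f.1 c.v ≤ 1/2
  · have e : phiFn c f = Quot.mk _ (Sum.inl ⟨AfnX c f.1, Afn_memD c f h1⟩) := dif_pos h1
    rw [e]
    unfold Hfn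
    rw [dif_pos (show f.1 c.v ≤ (1 - ((0:unitInterval):ℝ))/2 by rw [I0]; simpa using h1)]
    exact Subtype.ext rfl
  · have e : phiFn c f = Quot.mk _ (Sum.inr (phi2 c ⟨f, (not_le.mp h1).le⟩)) := dif_neg h1
    rw [e]
    by_cases h2 : f.1 c.v < 1
    · have e2 : phi2 c ⟨f, (not_le.mp h1).le⟩ =
          Quot.mk _ (Sum.inl (⟨gfn c f.1, gfn_memL c f (not_le.mp h1).le h2⟩,
            ⟨2 * f.1 c.v - 1, Set.mem_Icc.mpr ⟨by linarith [not_le.mp h1], by linarith⟩⟩)) :=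
        dif_pos h2
      rw [e2]
      show Hfn c (f, 0) = psiM c _
      unfold Hfn
      rw [dif_neg (show ¬ (f.1 c.v ≤ (1 - ((0:unitInterval):ℝ))/2) by rw [I0]; simpa using h1)]
      by_cases h3 : f.1 c.v ≤ 3/4
      · rw [dif_pos (show f.1 c.v ≤ 3*(1 - ((0:unitInterval):ℝ))/4 by rw [I0]; simpa using h3)]
        exact Subtype.ext (P2_eq_m c f (not_le.mp h1).le h3)
      · rw [dif_neg (show ¬ (f.1 c.v ≤ 3*(1 - ((0:unitInterval):ℝ))/4) by rw [I0]; simpa using h3)]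
        exact Subtype.ext (P3_eq_m c f (not_le.mp h3).le h2)
    · have ht1 : f.1 c.v = 1 := le_antisymm (coord_le_one c f c.v) (not_lt.mp h2)
      have e2 : phi2 c ⟨f, (not_le.mp h1).le⟩ = Quot.mk _ (Sum.inr true) := dif_neg h2
      rw [e2]
      show Hfn c (f, 0) = vX c
      unfold Hfn
      rw [dif_neg (show ¬ (f.1 c.v ≤ (1 - ((0:unitInterval):ℝ))/2) by rw [I0]; simpa using h1),
        dif_neg (show ¬ (f.1 c.v ≤ 3*(1 - ((0:unitInterval):ℝ))/4) by rw [I0, ht1]; norm_num)]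
      refine Subtype.ext ?_
      show P3fn c f.1 ((0:unitInterval):ℝ) = deltaFn c.v
      rw [I0, eq_deltaFn_of_coord_one f.2.2.1 f.2.2.2 ht1, P3_delta c]

theorem H_one (f : XX c) : Hfn c (f, 1) = f := by
  by_cases h1 : f.1 c.v ≤ (1 - ((1:unitInterval):ℝ))/2
  · unfold Hfn
    rw [dif_pos h1]
    rw [I1] at h1
    norm_num at h1
    exact Subtype.ext (Afn_zero c f.1 (le_antisymm h1 (f.2.2.1 c.v)))
  · unfold Hfn
    rw [dif_neg h1, dif_neg (show ¬ (f.1 c.v ≤ 3*(1 - ((1:unitInterval):ℝ))/4) by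
      rw [I1]; rw [I1] at h1; simpa using h1)]
    refine Subtype.ext ?_
    show P3fn c f.1 ((1:unitInterval):ℝ) = f.1
    rw [I1, P3_one c]

def Hhtpy : ContinuousMap.Homotopy ((psiCM c).comp (phiCM c)) (ContinuousMap.id (XX c)) :=
  { toContinuousMap := ⟨fun q => Hfn c (q.2, q.1),
      (continuous_Hfn c).comp (continuous_snd.prodMk continuous_fst)⟩,
    map_zero_left := fun x => H_zero c x,
    map_one_left := fun x => H_one c x }


/-! ### the homotopy K : φ ∘ ψ ≃ id on the wedge -/

theorem sigma_mem (s τ : unitInterval) (hbs : 3*(1 - τ.1)/4 ≤ s.1) :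
    (s.1 - 3*(1 - τ.1)/4)/(1 - 3*(1 - τ.1)/4) ∈ unitInterval := by
  have h1 : 3*(1 - τ.1)/4 ≤ 3/4 := by linarith [τ.2.1]
  have h2 : (0:ℝ) < 1 - 3*(1 - τ.1)/4 := by linarith
  refine Set.mem_Icc.mpr ⟨div_nonneg (by linarith) h2.le, ?_⟩
  rw [div_le_one h2]
  linarith [s.2.2]

def Ktil : (XL c × unitInterval) × unitInterval → WW c := fun p =>
  if hsb : p.1.2.1 ≤ 3*(1 - p.2.1)/4 then
    Quot.mk _ (Sum.inl ⟨kfn c p.1.1.1 p.1.2.1 p.2.1,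
      k_memD c p.1.1 _ _ p.1.2.2.1 p.2.2.1 p.2.2.2⟩)
  else
    Quot.mk _ (Sum.inr (Quot.mk _ (Sum.inl (p.1.1,
      ⟨(p.1.2.1 - 3*(1 - p.2.1)/4)/(1 - 3*(1 - p.2.1)/4),
        sigma_mem p.1.2 p.2 (not_le.mp hsb).le⟩))))

theorem kfn_gamma_zero (g : V → ℝ) (s τ : ℝ)
    (hγ : max 0 (min (2*s) (3*(1-τ) - 4*s)) = 0) : kfn c g s τ = deltaFn c.u := by
  unfold kfn
  rw [hγ, sub_zero, mixFn_100 (cuv c)]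

theorem Ktil_bdry (g : XL c) (s τ : unitInterval) (hsb : s.1 = 3*(1 - τ.1)/4)
    (mem1 : _) (σmem : _) :
    (Quot.mk _ (Sum.inl (⟨kfn c g.1 s.1 τ.1, mem1⟩ : XD c)) : WW c) =
      Quot.mk _ (Sum.inr (Quot.mk _ (Sum.inl (g,
        (⟨(s.1 - 3*(1 - τ.1)/4)/(1 - 3*(1 - τ.1)/4), σmem⟩ : unitInterval))))) := by
  have h30 : 3*(1 - τ.1) - 4*s.1 = 0 := by rw [hsb]; ring
  have hγ : max 0 (min (2*s.1) (3*(1 - τ.1) - 4*s.1)) = 0 := by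
    rw [h30, min_eq_right (by linarith [s.2.1] : (0:ℝ) ≤ 2*s.1)]
    exact max_self 0
  have e1 : (⟨kfn c g.1 s.1 τ.1, mem1⟩ : XD c) = puD c :=
    Subtype.ext (kfn_gamma_zero c g.1 s.1 τ.1 hγ)
  rw [e1]
  refine (Quot.sound ⟨rfl, rfl⟩).trans ?_
  apply congrArg (fun z => Quot.mk _ (Sum.inr z) : SL c → WW c)
  refine Eq.symm (Quot.sound (Or.inl ⟨Subtype.ext ?_, rfl⟩))
  show (s.1 - 3*(1 - τ.1)/4)/(1 - 3*(1 - τ.1)/4) = ((0 : unitInterval) : ℝ)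
  rw [I0, hsb]
  simp

theorem mk_inl_eq {x : XD c} (h : x.1 = deltaFn c.u) :
    (Quot.mk _ (Sum.inl x) : WW c) = Quot.mk _ (Sum.inr (qL c)) := by
  have e : x = puD c := Subtype.ext h
  rw [e]
  exact Quot.sound ⟨rfl, rfl⟩

theorem continuous_Ktil : Continuous (Ktil c) := by
  have hg : Continuous fun p : (XL c × unitInterval) × unitInterval => (p.1.1.1 : V → ℝ) :=
    continuous_subtype_val.comp (continuous_fst.comp continuous_fst)
  have hs : Continuous fun p : (XL c × unitInterval) × unitInterval => (p.1.2.1 : ℝ) :=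
    continuous_subtype_val.comp (continuous_snd.comp continuous_fst)
  have hτ : Continuous fun p : (XL c × unitInterval) × unitInterval => (p.2.1 : ℝ) :=
    continuous_subtype_val.comp continuous_snd
  have hb : Continuous fun p : (XL c × unitInterval) × unitInterval =>
      3*(1 - p.2.1)/4 := (continuous_const.mul (continuous_const.sub hτ)).div_const 4
  have hγ : Continuous fun p : (XL c × unitInterval) × unitInterval =>
      max 0 (min (2*p.1.2.1) (3*(1 - p.2.1) - 4*p.1.2.1)) :=
    continuous_const.max ((continuous_const.mul hs).min
      ((continuous_const.mul (continuous_const.sub hτ)).sub (continuous_const.mul hs)))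
  refine glue2 (φ := Ktil c)
    (C1 := {p : (XL c × unitInterval) × unitInterval | p.1.2.1 ≤ 3*(1 - p.2.1)/4})
    (C2 := {p : (XL c × unitInterval) × unitInterval | 3*(1 - p.2.1)/4 ≤ p.1.2.1})
    ?_ (isClosed_le hs hb) (isClosed_le hb hs)
    (f1 := fun x => Quot.mk _ (Sum.inl ⟨kfn c x.1.1.1.1 x.1.1.2.1 x.1.2.1,
      k_memD c x.1.1.1 _ _ x.1.1.2.2.1 x.1.2.2.1 x.1.2.2.2⟩)) ?_
    (f2 := fun x => Quot.mk _ (Sum.inr (Quot.mk _ (Sum.inl (x.1.1.1,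
      ⟨(x.1.1.2.1 - 3*(1 - x.1.2.1)/4)/(1 - 3*(1 - x.1.2.1)/4),
        sigma_mem x.1.1.2 x.1.2 x.2⟩))))) ?_ ?_ ?_
  · ext p
    simp only [Set.mem_union, Set.mem_setOf_eq, Set.mem_univ, iff_true]
    exact le_total _ _
  · refine (continuous_quot_mk.comp continuous_inl).comp ?_
    apply Continuous.subtype_mk
    exact continuous_mixFn (hg.comp continuous_subtype_val)
      (continuous_const.sub (hγ.comp continuous_subtype_val)) continuous_const
      (hγ.comp continuous_subtype_val)
  · refine (continuous_quot_mk.comp continuous_inr).comp ?_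
    refine Continuous.comp continuous_quot_mk ?_
    refine Continuous.comp continuous_inl ?_
    refine Continuous.prodMk ((continuous_fst.comp continuous_fst).comp
      continuous_subtype_val) ?_
    apply Continuous.subtype_mk
    have hbne : ∀ x : {p : (XL c × unitInterval) × unitInterval |
        3*(1 - p.2.1)/4 ≤ p.1.2.1}, 1 - 3*(1 - x.1.2.1)/4 ≠ 0 := by
      intro x
      have := x.1.2.2.1
      intro hcon
      rw [sub_eq_zero] at hcon
      nlinarith [hcon]
    exact Continuous.div ((hs.comp continuous_subtype_val).sub (hb.comp continuous_subtype_val))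
      (continuous_const.sub (hb.comp continuous_subtype_val)) hbne
  · intro x
    unfold Ktil
    exact dif_pos x.2
  · intro x
    unfold Ktil
    by_cases hsb : x.1.1.2.1 ≤ 3*(1 - x.1.2.1)/4
    · rw [dif_pos hsb]
      exact Ktil_bdry c x.1.1.1 x.1.1.2 x.1.2 (le_antisymm hsb x.2) _ _
    · rw [dif_neg hsb]

def KtilCM : C((XL c × unitInterval) × unitInterval, WW c) := ⟨Ktil c, continuous_Ktil c⟩

def KS : SL c → C(unitInterval, WW c) :=
  Quot.lift (Sum.elim (fun p => (KtilCM c).curry p)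
    (fun b => ContinuousMap.const _ (Quot.mk _ (Sum.inr (Quot.mk _ (Sum.inr b)))))) (by
    rintro (⟨g, s⟩ | b) (⟨g', s'⟩ | b') hrel
    · exact absurd hrel not_false
    · rcases hrel with ⟨hs, hb⟩ | ⟨hs, hb⟩
      · subst hs; subst hb
        ext τ
        show Ktil c ((g, 0), τ) = _
        unfold Ktil
        rw [dif_pos (show ((0:unitInterval):ℝ) ≤ 3*(1 - τ.1)/4 by
          rw [I0]; linarith [τ.2.2])]
        have hγ : max 0 (min (2*((0:unitInterval):ℝ)) (3*(1 - τ.1) - 4*((0:unitInterval):ℝ))) = 0 := by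
          rw [I0]
          rw [min_eq_left (by linarith [τ.2.2])]
          norm_num
        exact mk_inl_eq c (kfn_gamma_zero c g.1 _ τ.1 hγ)
      · subst hs; subst hb
        ext τ
        show Ktil c ((g, 1), τ) = _
        unfold Ktil
        rw [dif_neg (show ¬ (((1:unitInterval):ℝ) ≤ 3*(1 - τ.1)/4) by
          rw [I1]; intro hcon; linarith [τ.2.1])]
        apply congrArg (fun z => Quot.mk _ (Sum.inr z) : SL c → WW c)
        refine Quot.sound (Or.inr ⟨Subtype.ext ?_, rfl⟩)
        show (((1:unitInterval):ℝ) - 3*(1 - τ.1)/4)/(1 - 3*(1 - τ.1)/4) = ((1 : unitInterval) : ℝ)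
        rw [I1]
        have h2 : (0:ℝ) < 1 - 3*(1 - τ.1)/4 := by linarith [τ.2.1]
        field_simp
        rw [div_self (ne_of_gt (by linarith : (0:ℝ) < 4 - 3*(1 - τ.1)))]
    · exact absurd hrel not_false
    · exact absurd hrel not_false)

def KD : C(XD c, C(unitInterval, WW c)) :=
  ContinuousMap.curry ⟨fun p : XD c × unitInterval => Quot.mk _ (Sum.inl p.1),
    continuous_quot_mk.comp (continuous_inl.comp continuous_fst)⟩

theorem continuous_KS : Continuous (KS c) := by
  apply continuous_quot_lift
  apply Continuous.sumElim
  · exact (ContinuousMap.curry (KtilCM c)).continuous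
  · exact continuous_of_discreteTopology

def KW : WW c → C(unitInterval, WW c) :=
  Quot.lift (Sum.elim (fun d => KD c d) (KS c)) (by
    rintro p q ⟨rfl, rfl⟩
    ext τ
    show Quot.mk _ (Sum.inl (puD c)) = Quot.mk _ (Sum.inr (Quot.mk _ (Sum.inr false)))
    exact Quot.sound ⟨rfl, rfl⟩)


theorem mfn_v (g : V → ℝ) (s : ℝ) : mfn c g s c.v = max 0 (2*s - 1) := by
  unfold mfn
  exact mixFn_v (cuv c) g _ _ _

theorem A_m_eq_k (g : XL c) (s : ℝ) (hs0 : 0 ≤ s) (hs34 : s ≤ 3/4) :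
    AfnX c (mfn c g.1 s) = kfn c g.1 s 0 := by
  rcases le_total s (1/2) with hs | hs
  · have htm : mfn c g.1 s c.v = 0 := by
      rw [mfn_v c, max_eq_left (by linarith)]
    rw [Afn_zero c _ htm]
    unfold mfn kfn
    apply mixFn_congr
    · rw [max_eq_right (by linarith : (0:ℝ) ≤ 1 - 2*s),
        min_eq_left (by linarith : 2*s ≤ 3*(1-(0:ℝ)) - 4*s),
        max_eq_right (by linarith : (0:ℝ) ≤ 2*s)]
    · rw [max_eq_left (by linarith : 2*s - 1 ≤ 0)]
    · rw [abs_of_nonpos (by linarith : 2*s - 1 ≤ 0),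
        min_eq_left (by linarith : 2*s ≤ 3*(1-(0:ℝ)) - 4*s),
        max_eq_right (by linarith : (0:ℝ) ≤ 2*s)]
      ring
  · have htm : mfn c g.1 s c.v = 2*s - 1 := by
      rw [mfn_v c, max_eq_right (by linarith)]
    have hne : (1:ℝ) - (2*s - 1) ≠ 0 := by intro hc; rw [sub_eq_zero] at hc; nlinarith [hc]
    have hγ0 : max 0 (min (2*s) (3*(1-(0:ℝ)) - 4*s)) = 3 - 4*s := by
      rw [min_eq_right (by linarith : 3*(1-(0:ℝ)) - 4*s ≤ 2*s),
        max_eq_right (by linarith : (0:ℝ) ≤ 3*(1-(0:ℝ)) - 4*s)]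
      ring
    have hmu : mfn c g.1 s c.u = (2 - 2*s) * g.1 c.u := by
      unfold mfn
      rw [mixFn_u (cuv c), abs_of_nonneg (by linarith : (0:ℝ) ≤ 2*s - 1),
        max_eq_left (by linarith : 1 - 2*s ≤ 0)]
      ring
    funext w
    rcases eq_or_ne w c.v with rfl | hwv
    · unfold AfnX kfn
      rw [mixFn_v (cuv c), mixFn_v (cuv c)]
    · rcases eq_or_ne w c.u with rfl | hwu
      · unfold AfnX kfn
        rw [mixFn_u (cuv c), mixFn_u (cuv c), htm, hmu, hγ0]
        field_simp
        ring
      · have hmw : mfn c g.1 s w = (2 - 2*s) * g.1 w := by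
          unfold mfn
          rw [mixFn_w hwv hwu, abs_of_nonneg (by linarith : (0:ℝ) ≤ 2*s - 1)]
          ring
        unfold AfnX kfn
        rw [mixFn_w hwv hwu, mixFn_w hwv hwu, htm, hmw, hγ0]
        field_simp
        ring

theorem gfn_m (g : XL c) (s : ℝ) (hhalf : 1/2 ≤ s) (hs1 : s < 1) :
    gfn c (mfn c g.1 s) = g.1 := by
  have htm : mfn c g.1 s c.v = 2*s - 1 := by
    rw [mfn_v c, max_eq_right (by linarith)]
  have hne : (2:ℝ) - 2*s ≠ 0 := by intro hc; nlinarith [hc]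
  funext w
  rcases eq_or_ne w c.v with rfl | hwv
  · rw [gfn_v c, XL_v c g]
  · rw [gfn_ne_v c hwv, htm]
    rcases eq_or_ne w c.u with rfl | hwu
    · have hmu : mfn c g.1 s c.u = (2 - 2*s) * g.1 c.u := by
        unfold mfn
        rw [mixFn_u (cuv c), abs_of_nonneg (by linarith : (0:ℝ) ≤ 2*s - 1),
          max_eq_left (by linarith : 1 - 2*s ≤ 0)]
        ring
      rw [hmu, show (1:ℝ) - (2*s - 1) = 2 - 2*s by ring, one_div, inv_mul_cancel_left₀ hne]
    · have hmw : mfn c g.1 s w = (2 - 2*s) * g.1 w := by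
        unfold mfn
        rw [mixFn_w hwv hwu, abs_of_nonneg (by linarith : (0:ℝ) ≤ 2*s - 1)]
        ring
      rw [hmw, show (1:ℝ) - (2*s - 1) = 2 - 2*s by ring, one_div, inv_mul_cancel_left₀ hne]

theorem uX_v : (uX c).1 c.v = 0 := by
  show deltaFn c.u c.v = 0
  unfold deltaFn
  rw [if_neg (fun hc => (cuv c) hc.symm)]

theorem K_zero : ∀ x : WW c, KW c x 0 = phiFn c (psiW c x) := by
  refine Quot.ind ?_
  rintro (d | z)
  · show Quot.mk _ (Sum.inl d) = phiFn c (psiD c d)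
    have hdv : (psiD c d).1 c.v = 0 := XD_v c d
    have h1 : (psiD c d).1 c.v ≤ 1/2 := by rw [hdv]; norm_num
    unfold phiFn
    rw [dif_pos h1]
    exact congrArg (fun z => Quot.mk _ (Sum.inl z) : XD c → WW c)
      (Subtype.ext (Afn_zero c _ hdv).symm)
  · show KS c z 0 = phiFn c (psiS c z)
    induction z using Quot.ind with
    | _ y =>
      rcases y with ⟨g, s⟩ | b
      · show Ktil c ((g, s), 0) = phiFn c (psiM c (g, s))
        have hvm : (psiM c (g, s)).1 c.v = max 0 (2*s.1 - 1) := mfn_v c g.1 s.1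
        by_cases hs : s.1 ≤ 3/4
        · have h1 : (psiM c (g, s)).1 c.v ≤ 1/2 := by
            rw [hvm]
            exact max_le (by norm_num) (by linarith)
          unfold Ktil phiFn
          rw [dif_pos (show s.1 ≤ 3*(1 - ((0:unitInterval):ℝ))/4 by rw [I0]; linarith),
            dif_pos h1]
          refine congrArg (fun z => Quot.mk _ (Sum.inl z) : XD c → WW c) (Subtype.ext ?_)
          show kfn c g.1 s.1 ((0:unitInterval):ℝ) = AfnX c (psiM c (g, s)).1
          rw [I0]
          exact (A_m_eq_k c g s.1 s.2.1 hs).symm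
        · have h1 : ¬ ((psiM c (g, s)).1 c.v ≤ 1/2) := by
            rw [hvm, max_eq_right (by linarith : (0:ℝ) ≤ 2*s.1 - 1)]
            intro hcon
            linarith
          unfold Ktil phiFn
          rw [dif_neg (show ¬ (s.1 ≤ 3*(1 - ((0:unitInterval):ℝ))/4) by rw [I0]; intro hc; linarith),
            dif_neg h1]
          apply congrArg (fun z => Quot.mk _ (Sum.inr z) : SL c → WW c)
          by_cases hs1 : s.1 < 1
          · have htm : (psiM c (g, s)).1 c.v < 1 := by
              rw [hvm, max_eq_right (by linarith : (0:ℝ) ≤ 2*s.1 - 1)]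
              linarith
            unfold phi2
            rw [dif_pos htm]
            refine congrArg (fun z => Quot.mk _ (Sum.inl z)) (Prod.ext ?_ ?_)
            · refine Subtype.ext ?_
              show g.1 = gfn c (psiM c (g, s)).1
              exact (gfn_m c g s.1 (by linarith) hs1).symm
            · refine Subtype.ext ?_
              show (s.1 - 3*(1 - ((0:unitInterval):ℝ))/4)/(1 - 3*(1 - ((0:unitInterval):ℝ))/4)
                = 2 * (psiM c (g, s)).1 c.v - 1
              rw [I0, hvm, max_eq_right (by linarith : (0:ℝ) ≤ 2*s.1 - 1)]
              norm_num
              field_simp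
              ring
          · have hs1' : s.1 = 1 := le_antisymm s.2.2 (not_lt.mp hs1)
            have htm : ¬ ((psiM c (g, s)).1 c.v < 1) := by
              rw [hvm, hs1']
              norm_num
            unfold phi2
            rw [dif_neg htm]
            refine Quot.sound (Or.inr ⟨Subtype.ext ?_, rfl⟩)
            show (s.1 - 3*(1 - ((0:unitInterval):ℝ))/4)/(1 - 3*(1 - ((0:unitInterval):ℝ))/4)
              = ((1:unitInterval):ℝ)
            rw [I0, I1, hs1']
            norm_num
      · cases b
        · show Quot.mk _ (Sum.inr (Quot.mk _ (Sum.inr false))) = phiFn c (uX c)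
          have h1 : (uX c).1 c.v ≤ 1/2 := by rw [uX_v c]; norm_num
          unfold phiFn
          rw [dif_pos h1]
          exact Eq.symm (mk_inl_eq c (Afn_zero c (deltaFn c.u) (uX_v c)))
        · show Quot.mk _ (Sum.inr (Quot.mk _ (Sum.inr true))) = phiFn c (vX c)
          have h1 : ¬ ((vX c).1 c.v ≤ 1/2) := by rw [vX_v c]; norm_num
          unfold phiFn
          rw [dif_neg h1]
          apply congrArg (fun z => Quot.mk _ (Sum.inr z) : SL c → WW c)
          unfold phi2
          rw [dif_neg (show ¬ ((vX c).1 c.v < 1) by rw [vX_v c]; norm_num)]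

theorem K_one : ∀ x : WW c, KW c x 1 = x := by
  refine Quot.ind ?_
  rintro (d | z)
  · rfl
  · show KS c z 1 = Quot.mk _ (Sum.inr z)
    induction z using Quot.ind with
    | _ y =>
      rcases y with ⟨g, s⟩ | b
      · show Ktil c ((g, s), 1) = Quot.mk _ (Sum.inr (Quot.mk _ (Sum.inl (g, s))))
        by_cases hs : s.1 ≤ 3*(1 - ((1:unitInterval):ℝ))/4
        · have hs0 : s.1 = 0 := by
            rw [I1] at hs
            norm_num at hs
            exact le_antisymm hs s.2.1
          unfold Ktil
          rw [dif_pos hs]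
          have hγ : max 0 (min (2*s.1) (3*(1 - ((1:unitInterval):ℝ)) - 4*s.1)) = 0 := by
            rw [I1, hs0]
            norm_num
          refine (mk_inl_eq c (kfn_gamma_zero c g.1 _ _ hγ)).trans ?_
          apply congrArg (fun z => Quot.mk _ (Sum.inr z) : SL c → WW c)
          refine Eq.symm (Quot.sound (Or.inl ⟨Subtype.ext ?_, rfl⟩))
          show s.1 = ((0:unitInterval):ℝ)
          rw [I0, hs0]
        · unfold Ktil
          rw [dif_neg hs]
          apply congrArg (fun z => Quot.mk _ (Sum.inr z) : SL c → WW c)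
          refine congrArg (fun z => Quot.mk _ (Sum.inl z)) (Prod.ext rfl (Subtype.ext ?_))
          show (s.1 - 3*(1 - ((1:unitInterval):ℝ))/4)/(1 - 3*(1 - ((1:unitInterval):ℝ))/4) = s.1
          rw [I1]
          norm_num
      · rfl

theorem continuous_KW : Continuous (KW c) := by
  apply continuous_quot_lift
  exact ((KD c).continuous).sumElim (continuous_KS c)

def Khtpy : ContinuousMap.Homotopy ((phiCM c).comp (psiCM c)) (ContinuousMap.id (WW c)) :=
  { toContinuousMap := ⟨fun q => KW c q.2 q.1,
      (ContinuousMap.uncurry ⟨KW c, continuous_KW c⟩).continuous.comp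
        (continuous_snd.prodMk continuous_fst)⟩,
    map_zero_left := fun x => K_zero c x,
    map_one_left := fun x => K_one c x }

def theEquiv : ContinuousMap.HomotopyEquiv (XX c) (WW c) :=
  { toFun := phiCM c,
    invFun := psiCM c,
    left_inv := ⟨Hhtpy c⟩,
    right_inv := ⟨Khtpy c⟩ }

end Eng

end

/-- If `N_G[u] ⊆ N_G[v]` for distinct vertices `u, v`, then
`I(G) ≃ I(G - v) ∨ Σ I(G - N_G[v])`. -/
theorem indepComplex_homotopyEquiv_wedge_of_closed_nbhd_subset {V : Type} [Fintype V]
    (G : SimpleGraph V) (u v : V) (huv : u ≠ v)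
    (h : (insert u (G.neighborSet u) : Set V) ⊆ insert v (G.neighborSet v)) :
    ∃ (p : cxSpace (restrictC (indepFaces G) {w | w ≠ v}))
      (q : Susp (cxSpace (restrictC (indepFaces G) {w | w ≠ v ∧ ¬ G.Adj v w}))),
      Nonempty (ContinuousMap.HomotopyEquiv
        (cxSpace (indepFaces G))
        (Wedge (cxSpace (restrictC (indepFaces G) {w | w ≠ v}))
          (Susp (cxSpace (restrictC (indepFaces G) {w | w ≠ v ∧ ¬ G.Adj v w})))
          p q)) := by
  have hvu : G.Adj v u := by
    have hu : u ∈ (insert v (G.neighborSet v) : Set V) := h (Set.mem_insert u _)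
    rcases Set.mem_insert_iff.mp hu with hc | hc
    · exact absurd hc huv
    · exact hc
  have hN : ∀ w, G.Adj u w → w = v ∨ G.Adj v w := by
    intro w hw
    have hmem : w ∈ (insert v (G.neighborSet v) : Set V) :=
      h (Set.mem_insert_iff.mpr (Or.inr hw))
    rcases Set.mem_insert_iff.mp hmem with hc | hc
    · exact Or.inl hc
    · exact Or.inr hc
  exact ⟨Eng.puD ⟨G, u, v, hvu, hN⟩, Eng.qL ⟨G, u, v, hvu, hN⟩,
    ⟨Eng.theEquiv ⟨G, u, v, hvu, hN⟩⟩⟩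
end
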